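/- arXiv:1403.1699 — 5 statements merged into one kernel-verified Lean document; each statement's English description precedes it below -/
import Mathlib

section
/- For every x ≥ 0, P(Z > x) ≤ 2 exp(−x²/8), where Z = sup_{t∈[0,1]}(Ŵ(t) − W(t)). In particular, for every γ ∈ (0,1), the (1−γ)-quantile q(γ) of Z satisfies q(γ) ≤ 2√(2 log(2/γ)). -/
open MeasureTheory ProbabilityTheory Set

noncomputable section

/-- Value at `t` of the least concave majorant of `G` restricted to `[a,b]`:
the pointwise infimum over all concave functions on `[a,b]` dominating `G` there. -/
def lcmaj (G : ℝ → ℝ) (a b t : ℝ) : ℝ :=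
  sInf {y : ℝ | ∃ h : ℝ → ℝ, ConcaveOn ℝ (Icc a b) h ∧
    (∀ x ∈ Icc a b, G x ≤ h x) ∧ y = h t}

/-- `sup_{t ∈ [a,b]} (Ĝ^{[a,b]}(t) − G(t))`. -/
def lcmGap (G : ℝ → ℝ) (a b : ℝ) : ℝ :=
  sSup ((fun t => lcmaj G a b t - G t) '' Icc a b)

/-- Standard Brownian motion on `[0,1]` started at `0`. -/
structure IsStandardBM {Ω : Type*} [MeasurableSpace Ω] (P : Measure Ω)
    (W : Ω → ℝ → ℝ) : Prop where
  meas : ∀ t, Measurable fun ω => W ω t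
  start : ∀ ω, W ω 0 = 0
  cont : ∀ ω, ContinuousOn (W ω) (Icc 0 1)
  gauss : ∀ s t : ℝ, 0 ≤ s → s ≤ t → t ≤ 1 →
    P.map (fun ω => W ω t - W ω s) = gaussianReal 0 (Real.toNNReal (t - s))
  indep : ∀ u : ℕ → ℝ, Monotone u → (∀ i, u i ∈ Icc (0:ℝ) 1) →
    iIndepFun (fun i ω => W ω (u (i + 1)) - W ω (u i)) P

/-- Observed process `F_n` in the white noise model. -/
def Fproc (f : ℝ → ℝ) (σ : ℝ) (n : ℕ) {Ω : Type*} (W : Ω → ℝ → ℝ) (ω : Ω) (t : ℝ) : ℝ :=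
  (∫ x in (0:ℝ)..t, f x) + σ / Real.sqrt n * W ω t

/-- Local test statistic `S_n^{[a,b]}`. -/
def Sstat (f : ℝ → ℝ) (σ : ℝ) (n : ℕ) {Ω : Type*} (W : Ω → ℝ → ℝ)
    (a b : ℝ) (ω : Ω) : ℝ :=
  Real.sqrt (n / (σ ^ 2 * (b - a))) * lcmGap (Fproc f σ n W ω) a b

/-- `Z = sup_{t ∈ [0,1]} (Ŵ(t) − W(t))`. -/
def Zvar {Ω : Type*} (W : Ω → ℝ → ℝ) (ω : Ω) : ℝ := lcmGap (W ω) 0 1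

/-- The `p`-th quantile of a measure on `ℝ`. -/
def mQuantile (μ : Measure ℝ) (p : ℝ) : ℝ :=
  sInf {x : ℝ | ENNReal.ofReal p ≤ μ (Iic x)}

/-- The `p`-th quantile of a real random variable. -/
def quantile {Ω : Type*} [MeasurableSpace Ω] (P : Measure Ω) (X : Ω → ℝ) (p : ℝ) : ℝ :=
  mQuantile (P.map X) p

/-- `max_{I ∈ 𝒞} S_n^I`, intervals being encoded as pairs of endpoints. -/
def maxStat (𝒞 : Finset (ℝ × ℝ)) (f : ℝ → ℝ) (σ : ℝ) (n : ℕ) {Ω : Type*}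
    (W : Ω → ℝ → ℝ) (ω : Ω) : ℝ :=
  sSup ((fun p : ℝ × ℝ => Sstat f σ n W p.1 p.2 ω) '' (𝒞 : Set (ℝ × ℝ)))

/-- `max_{I ∈ 𝒞} |I|^{-1/2} sup_{t ∈ I} (Ŵ^I(t) − W(t))`. -/
def maxNoise (𝒞 : Finset (ℝ × ℝ)) {Ω : Type*} (W : Ω → ℝ → ℝ) (ω : Ω) : ℝ :=
  sSup ((fun p : ℝ × ℝ => (Real.sqrt (p.2 - p.1))⁻¹ * lcmGap (W ω) p.1 p.2) '' (𝒞 : Set (ℝ × ℝ)))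

/-- The critical threshold `s_{α,n}`. -/
def salpha {Ω : Type*} [MeasurableSpace Ω] (P : Measure Ω) (𝒞 : Finset (ℝ × ℝ))
    (W : Ω → ℝ → ℝ) (α : ℝ) : ℝ :=
  quantile P (maxNoise 𝒞 W) (1 - α)

/-- The collection of all intervals `[i/n, j/n]`, `0 ≤ i < j ≤ n`. -/
def gridC (n : ℕ) : Finset (ℝ × ℝ) :=
  (((Finset.range (n + 1)) ×ˢ (Finset.range (n + 1))).filter (fun p => p.1 < p.2)).image
    (fun p => ((p.1 : ℝ) / n, (p.2 : ℝ) / n))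

/-- `f̄_{xy} = (y-x)⁻¹ ∫_x^y f`. -/
def fbar (f : ℝ → ℝ) (x y : ℝ) : ℝ := (y - x)⁻¹ * ∫ u in x..y, f u

/-- The Hölder class `F(s,R)` on `[0,1]`. -/
def holderClass (s R : ℝ) : Set (ℝ → ℝ) :=
  if s ≤ 1 then
    {f | ∀ u ∈ Icc (0:ℝ) 1, ∀ v ∈ Icc (0:ℝ) 1, |f u - f v| ≤ R * |u - v| ^ s}
  else
    {f | (∀ x ∈ Icc (0:ℝ) 1, DifferentiableAt ℝ f x) ∧
      ∀ u ∈ Icc (0:ℝ) 1, ∀ v ∈ Icc (0:ℝ) 1,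
        |deriv f u - deriv f v| ≤ R * |u - v| ^ (s - 1)}

/-- `Δ₁(f)`: sup-distance from `f` to the non-increasing functions on `[0,1]`. -/
def Delta1 (f : ℝ → ℝ) : ℝ :=
  sInf {d : ℝ | ∃ g : ℝ → ℝ, AntitoneOn g (Icc 0 1) ∧
    d = sSup ((fun t => |f t - g t|) '' Icc (0:ℝ) 1)}

/-- `Δ₂(f) = sup_{[0,1]} f'`. -/
def Delta2 (f : ℝ → ℝ) : ℝ :=
  sSup ((fun t => deriv f t) '' Icc (0:ℝ) 1)

/-- Uniform separation rate of a test with rejection probability `power f` under signal `f`,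
over the class `F`, with respect to criterion `Δ`, at power level `1 - β`. -/
def sepRate (power : (ℝ → ℝ) → ℝ) (F : Set (ℝ → ℝ)) (Δ : (ℝ → ℝ) → ℝ) (β : ℝ) : ℝ :=
  sInf {r : ℝ | 0 < r ∧ ∀ f ∈ F, r ≤ Δ f → 1 - β ≤ power f}

/-! Regression framework -/

/-- Piecewise linear interpolation on `[0,1]` of the values `v j` at the points `j/m`. -/
def plInterp (m : ℕ) (v : ℕ → ℝ) (t : ℝ) : ℝ :=
  v ⌊t * m⌋₊ + (t * m - ⌊t * m⌋₊) * (v (⌊t * m⌋₊ + 1) - v ⌊t * m⌋₊)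

/-- Cumulative sum diagram of the data `y 1, …, y m` with equal weights `1/m`. -/
def csd (m : ℕ) (y : ℕ → ℝ) : ℝ → ℝ :=
  plInterp m (fun j => (∑ i ∈ Finset.range j, y (i + 1)) / m)

/-- i.i.d. standard Gaussian noise. -/
def IsGaussNoise {Ω : Type*} [MeasurableSpace Ω] (P : Measure Ω) (ε : ℕ → Ω → ℝ) : Prop :=
  (∀ i, Measurable (ε i)) ∧ iIndepFun ε P ∧
    ∀ i, P.map (ε i) = gaussianReal 0 1

/-- Observations in the regression model: `Y_i = f(i/n) + σ ε_i`. -/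
def Yobs (f : ℝ → ℝ) (σ : ℝ) (n : ℕ) {Ω : Type*} (ε : ℕ → Ω → ℝ) (i : ℕ) (ω : Ω) : ℝ :=
  f ((i : ℝ) / n) + σ * ε i ω

/-- `Ȳ_i = (Y_{2i-1} + Y_{2i})/2`. -/
def Ybar (f : ℝ → ℝ) (σ : ℝ) (n : ℕ) {Ω : Type*} (ε : ℕ → Ω → ℝ) (i : ℕ) (ω : Ω) : ℝ :=
  (Yobs f σ n ε (2 * i - 1) ω + Yobs f σ n ε (2 * i) ω) / 2

/-- `ε̄_i = (ε_{2i-1} + ε_{2i})/√2`. -/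
def epsbar {Ω : Type*} (ε : ℕ → Ω → ℝ) (i : ℕ) (ω : Ω) : ℝ :=
  (ε (2 * i - 1) ω + ε (2 * i) ω) / Real.sqrt 2

/-- The variance estimator `σ̂² = (1/n) ∑ (Y_{2i} − Y_{2i-1})²`. -/
def hatSigmaSq (f : ℝ → ℝ) (σ : ℝ) (n : ℕ) {Ω : Type*} (ε : ℕ → Ω → ℝ) (ω : Ω) : ℝ :=
  (∑ i ∈ Finset.range (n / 2),
    (Yobs f σ n ε (2 * (i + 1)) ω - Yobs f σ n ε (2 * (i + 1) - 1) ω) ^ 2) / n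

/-- The local statistic `Ŝ_{n̄}^{reg,[a,b]}` in the regression model. -/
def SregStat (f : ℝ → ℝ) (σ : ℝ) (n : ℕ) {Ω : Type*} (ε : ℕ → Ω → ℝ)
    (a b : ℝ) (ω : Ω) : ℝ :=
  Real.sqrt ((n / 2 : ℕ) / ((hatSigmaSq f σ n ε ω / 2) * (b - a))) *
    lcmGap (csd (n / 2) (fun i => Ybar f σ n ε i ω)) a b

/-- `max_{I ∈ 𝒞} Ŝ_{n̄}^{reg,I}`. -/
def maxReg (𝒞 : Finset (ℝ × ℝ)) (f : ℝ → ℝ) (σ : ℝ) (n : ℕ) {Ω : Type*}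
    (ε : ℕ → Ω → ℝ) (ω : Ω) : ℝ :=
  sSup ((fun p : ℝ × ℝ => SregStat f σ n ε p.1 p.2 ω) '' (𝒞 : Set (ℝ × ℝ)))

/-- `Z_n^{reg} = max_{I ∈ 𝒞} √(n̄/|I|) sup_{t∈I} (Ĝ_{n̄}^I(t) − G_{n̄}(t))`. -/
def Zreg (𝒞 : Finset (ℝ × ℝ)) (n : ℕ) {Ω : Type*} (ε : ℕ → Ω → ℝ) (ω : Ω) : ℝ :=
  sSup ((fun p : ℝ × ℝ => Real.sqrt ((n / 2 : ℕ) / (p.2 - p.1)) *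
    lcmGap (csd (n / 2) (fun i => epsbar ε i ω)) p.1 p.2) '' (𝒞 : Set (ℝ × ℝ)))

/-- The critical threshold `r_{α,n}`: the `(1-α)`-quantile of `Z_n^{reg} / √(χ²(n̄)/n̄)`
with `χ²(n̄)` independent of `Z_n^{reg}`. -/
def ralpha {Ω : Type*} [MeasurableSpace Ω] (P : Measure Ω) (𝒞 : Finset (ℝ × ℝ)) (n : ℕ)
    (ε : ℕ → Ω → ℝ) (α : ℝ) : ℝ :=
  mQuantile (Measure.map (fun q : ℝ × ℝ => q.1 / Real.sqrt (q.2 / (n / 2 : ℕ)))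
    ((P.map (Zreg (𝒞 : Finset (ℝ × ℝ)) n ε)).prod
      (gammaMeasure ((n / 2 : ℕ) / 2 : ℝ) (1 / 2)))) (1 - α)



open scoped NNReal ENNReal

open Real in
lemma mgf_gauss (v : ℝ≥0) (t : ℝ) :
    Integrable (fun x => rexp (t * x)) (gaussianReal 0 v) ∧
    ∫ x, rexp (t * x) ∂(gaussianReal 0 v) = rexp (v * t ^ 2 / 2) := by
  by_cases hv : v = 0
  · subst hv
    rw [gaussianReal_zero_var]
    constructor
    · refine (integrable_const (rexp 0)).congr ?_
      have : ∀ᵐ x ∂(Measure.dirac (0:ℝ)), rexp 0 = rexp (t * x) := by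
        rw [ae_dirac_iff (measurableSet_eq_fun measurable_const (by fun_prop))]
        simp
      exact this
    · rw [integral_dirac]; simp
  · have hv' : (0:ℝ) < v := lt_of_le_of_ne (v.coe_nonneg) (by exact_mod_cast (Ne.symm hv))
    have key : ∀ x, (gaussianPDFReal 0 v x).toNNReal • rexp (t * x)
        = rexp ((v:ℝ) * t ^ 2 / 2) * gaussianPDFReal ((v:ℝ)*t) v x := by
      intro x
      rw [NNReal.smul_def, Real.coe_toNNReal _ (gaussianPDFReal_nonneg 0 v x)]
      unfold gaussianPDFReal
      rw [smul_eq_mul, mul_assoc]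
      have h1 : rexp (-(x - 0) ^ 2 / (2 * v) + t * x)
          = rexp ((v:ℝ)*t^2/2) * rexp (-(x - (v:ℝ)*t)^2/(2*(v:ℝ))) := by
        rw [← Real.exp_add]; congr 1; field_simp; ring
      rw [← Real.exp_add, h1]; ring
    have hmeas : Measurable fun x => (gaussianPDFReal 0 v x).toNNReal :=
      (measurable_gaussianPDFReal 0 v).real_toNNReal
    have hgr : gaussianReal 0 v
        = volume.withDensity (fun x => ((gaussianPDFReal 0 v x).toNNReal : ℝ≥0∞)) := by
      rw [gaussianReal_of_var_ne_zero 0 hv]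
      rfl
    constructor
    · rw [hgr, integrable_withDensity_iff_integrable_smul hmeas]
      simp_rw [key]
      exact (integrable_gaussianPDFReal _ _).const_mul _
    · rw [hgr, integral_withDensity_eq_integral_smul hmeas]
      simp_rw [key]
      rw [integral_const_mul, integral_gaussianPDFReal_eq_one _ hv, mul_one]

open Real in
lemma maximal_gauss {Ω : Type*} [MeasurableSpace Ω] (P : Measure Ω) [IsProbabilityMeasure P]
    (X : ℕ → Ω → ℝ) (hmeas : ∀ i, Measurable (X i)) (hX0 : ∀ ω, X 0 ω = 0)
    (hgauss : ∀ i j, i ≤ j → ∃ v : ℝ≥0, (v:ℝ) ≤ 1 ∧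
      P.map (fun ω => X j ω - X i ω) = gaussianReal 0 v)
    (hindep : iIndepFun (fun i ω => X (i+1) ω - X i ω) P)
    (m : ℕ) (a : ℝ) (ha : 0 ≤ a) :
    (P {ω | ∃ i ≤ m, a < X i ω}).toReal ≤ rexp (-a^2/2) := by
  classical
  have hexpm : Measurable (fun x : ℝ => rexp (a * x)) :=
    Real.measurable_exp.comp (measurable_id.const_mul a)
  set D : ℕ → Ω → ℝ := fun i ω => X (i+1) ω - X i ω with hD
  have hDmeas : ∀ i, Measurable (D i) := fun i => (hmeas (i+1)).sub (hmeas i)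
  have hXsum : ∀ k ω, X k ω = ∑ j ∈ Finset.range k, D j ω := by
    intro k ω
    rw [Finset.sum_range_sub (f := fun j => X j ω), hX0, sub_zero]
  -- laws
  have hlawX : ∀ i, ∃ v : ℝ≥0, (v:ℝ) ≤ 1 ∧ P.map (X i) = gaussianReal 0 v := by
    intro i
    obtain ⟨v, hv1, hv⟩ := hgauss 0 i (Nat.zero_le i)
    refine ⟨v, hv1, ?_⟩
    rw [← hv]
    congr 1
    funext ω
    rw [hX0, sub_zero]
  have hIntX : ∀ i, Integrable (fun ω => rexp (a * X i ω)) P := by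
    intro i
    obtain ⟨v, _, hv⟩ := hlawX i
    have := (mgf_gauss v a).1
    rw [← hv] at this
    exact (integrable_map_measure hexpm.aestronglyMeasurable
      (hmeas i).aemeasurable).mp this
  -- the first-passage events
  set A : ℕ → Set Ω := fun i =>
    {ω | a < X i ω} ∩ ⋂ j ∈ Finset.range i, {ω | X j ω ≤ a} with hA
  have hAmem : ∀ i ω, ω ∈ A i ↔ (a < X i ω ∧ ∀ j < i, X j ω ≤ a) := by
    intro i ω; simp [hA]
  have hAmeas : ∀ i, MeasurableSet (A i) := by
    intro i
    exact (measurableSet_lt measurable_const (hmeas i)).inter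
      (MeasurableSet.biInter (Finset.range i).countable_toSet
        (fun j _ => measurableSet_le (hmeas j) measurable_const))
  have hdisj : ∀ i j, i ≠ j → Disjoint (A i) (A j) := by
    intro i j hij
    rcases hij.lt_or_gt with h | h
    · refine Set.disjoint_left.2 fun ω hi hj => ?_
      exact absurd (((hAmem j ω).1 hj).2 i h) (not_le.2 ((hAmem i ω).1 hi).1)
    · refine Set.disjoint_left.2 fun ω hi hj => ?_
      exact absurd (((hAmem i ω).1 hi).2 j h) (not_le.2 ((hAmem j ω).1 hj).1)
  have hcover : {ω | ∃ i ≤ m, a < X i ω} = ⋃ i ∈ Finset.range (m+1), A i := by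
    ext ω
    simp only [Set.mem_setOf_eq, Set.mem_iUnion, Finset.mem_range]
    constructor
    · rintro ⟨i, him, hi⟩
      have hex : ∃ k, a < X k ω := ⟨i, hi⟩
      refine ⟨Nat.find hex, lt_of_le_of_lt (Nat.le_of_lt_succ ?_) (Nat.lt_succ_self m), ?_⟩
      · exact Nat.lt_succ_of_le (le_trans (Nat.find_le hi) him)
      · exact (hAmem _ ω).2 ⟨Nat.find_spec hex, fun j hj => not_lt.1 (Nat.find_min hex hj)⟩
    · rintro ⟨i, him, hi⟩
      exact ⟨i, Nat.lt_succ_iff.1 him, ((hAmem i ω).1 hi).1⟩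
  -- global integrand
  obtain ⟨vm, hvm1, hvm⟩ := hlawX m
  have hfint : Integrable (fun ω => rexp (a * X m ω)) P := hIntX m
  have hf0 : ∀ ω, 0 ≤ rexp (a * X m ω) := fun ω => (Real.exp_pos _).le
  have hintlemma : ∫ ω, rexp (a * X m ω) ∂P = rexp ((vm:ℝ) * a ^ 2 / 2) := by
    rw [← (mgf_gauss vm a).2, ← hvm,
      integral_map (hmeas m).aemeasurable (hexpm.aestronglyMeasurable)]
  -- per-piece estimate
  have hpiece : ∀ i ≤ m,
      rexp (a * a) * (P (A i)).toReal ≤ ∫ ω in A i, rexp (a * X m ω) ∂P := by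
    intro i him
    set S : Finset ℕ := Finset.range i with hS
    set T : Finset ℕ := Finset.Ico i m with hT
    have hST : Disjoint T S := by
      rw [Finset.disjoint_left]
      intro j hjT hjS
      rw [hT, Finset.mem_Ico] at hjT
      rw [hS, Finset.mem_range] at hjS
      omega
    -- functions on coordinate spaces
    set φX : ℕ → ({x // x ∈ S} → ℝ) → ℝ :=
      fun k y => ∑ j : {x // x ∈ S}, if (j : ℕ) < k then y j else 0 with hφX
    have hφXmeas : ∀ k, Measurable (φX k) := by
      intro k
      refine Finset.measurable_sum _ fun j _ => ?_
      by_cases hc : (j : ℕ) < k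
      · simpa [hc] using measurable_pi_apply j
      · simpa [hc] using measurable_const
    have hφXval : ∀ k, k ≤ i → ∀ ω, φX k (fun j => D (j : ℕ) ω) = X k ω := by
      intro k hk ω
      rw [hφX]
      simp only
      rw [Finset.sum_coe_sort S (fun j => if j < k then D j ω else 0)]
      rw [← Finset.sum_filter]
      have : Finset.filter (fun j => j < k) S = Finset.range k := by
        ext j
        simp only [hS, Finset.mem_filter, Finset.mem_range]
        omega
      rw [this, ← hXsum]
    set B : Set ({x // x ∈ S} → ℝ) :=
      {y | a < φX i y} ∩ ⋂ j ∈ Finset.range i, {y | φX j y ≤ a} with hB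
    have hBmeas : MeasurableSet B :=
      (measurableSet_lt measurable_const (hφXmeas i)).inter
        (MeasurableSet.biInter (Finset.range i).countable_toSet
          (fun j _ => measurableSet_le (hφXmeas j) measurable_const))
    set φ : ({x // x ∈ S} → ℝ) → ℝ := B.indicator (fun y => rexp (a * φX i y)) with hφ
    have hφmeas : Measurable φ := ((hφXmeas i).const_mul a).exp.indicator hBmeas
    set ψ : ({x // x ∈ T} → ℝ) → ℝ :=
      fun z => rexp (a * ∑ j : {x // x ∈ T}, z j) with hψ
    have hψmeas : Measurable ψ := by
      apply Measurable.exp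
      exact (Finset.measurable_sum _ fun j _ => measurable_pi_apply j).const_mul a
    set g : Ω → ℝ := (A i).indicator (fun ω => rexp (a * X i ω)) with hg
    set h : Ω → ℝ := fun ω => rexp (a * (X m ω - X i ω)) with hh
    have hgeq : g = φ ∘ (fun ω (j : {x // x ∈ S}) => D (j : ℕ) ω) := by
      funext ω
      have hBiff : (fun j : {x // x ∈ S} => D (j : ℕ) ω) ∈ B ↔ ω ∈ A i := by
        rw [hB, hA]
        simp only [Set.mem_inter_iff, Set.mem_setOf_eq, Set.mem_iUnion, Set.mem_iInter,
          Finset.mem_range]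
        constructor
        · rintro ⟨h1, h2⟩
          rw [hφXval i le_rfl ω] at h1
          refine ⟨h1, fun j hj => ?_⟩
          have := h2 j hj
          rwa [hφXval j (le_of_lt hj) ω] at this
        · rintro ⟨h1, h2⟩
          rw [hφXval i le_rfl ω]
          refine ⟨h1, fun j hj => ?_⟩
          rw [hφXval j (le_of_lt hj) ω]
          exact h2 j hj
      simp only [hg, hφ, Function.comp_apply, Set.indicator_apply]
      by_cases hω : ω ∈ A i
      · rw [if_pos hω, if_pos (hBiff.2 hω), hφXval i le_rfl ω]
      · rw [if_neg hω, if_neg (fun hc => hω (hBiff.1 hc))]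
    have hheq : h = ψ ∘ (fun ω (j : {x // x ∈ T}) => D (j : ℕ) ω) := by
      funext ω
      simp only [hh, hψ, Function.comp_apply]
      congr 1
      rw [Finset.sum_coe_sort T (fun j => D j ω), hT]
      have : ∑ j ∈ Finset.Ico i m, D j ω
          = ∑ j ∈ Finset.range m, D j ω - ∑ j ∈ Finset.range i, D j ω :=
        Finset.sum_Ico_eq_sub _ him
      rw [this, ← hXsum, ← hXsum]
    have hIndep : IndepFun h g P := by
      have base := hindep.indepFun_finset T S hST hDmeas
      have := base.comp hψmeas hφmeas
      rw [← hgeq, ← hheq] at this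
      exact this
    -- law of h
    obtain ⟨v, hv1, hv⟩ := hgauss i m him
    have hInth : Integrable h P := by
      have := (mgf_gauss v a).1
      rw [← hv] at this
      exact (integrable_map_measure (hexpm.aestronglyMeasurable)
        ((hmeas m).sub (hmeas i)).aemeasurable).mp this
    have hinth : ∫ ω, h ω ∂P = rexp ((v:ℝ) * a ^ 2 / 2) := by
      rw [hh, ← (mgf_gauss v a).2, ← hv,
        integral_map (φ := fun ω => X m ω - X i ω) ((hmeas m).sub (hmeas i)).aemeasurable
          (hexpm.aestronglyMeasurable)]
    have hinth1 : (1:ℝ) ≤ ∫ ω, h ω ∂P := by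
      rw [hinth]
      apply Real.one_le_exp
      positivity
    -- lower bound on ∫ g
    have hintg : rexp (a * a) * (P (A i)).toReal ≤ ∫ ω, g ω ∂P := by
      rw [hg, integral_indicator (hAmeas i)]
      have hconst : ∫ (_ : Ω) in A i, rexp (a * a) ∂P = rexp (a * a) * (P (A i)).toReal := by
        rw [setIntegral_const, smul_eq_mul, mul_comm]; rfl
      rw [← hconst]
      refine setIntegral_mono_on (integrableOn_const (measure_ne_top P _))
        ((hIntX i).integrableOn) (hAmeas i) (fun ω hω => ?_)
      have := ((hAmem i ω).1 hω).1
      exact Real.exp_le_exp.2 (mul_le_mul_of_nonneg_left this.le ha)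
    have hintg0 : 0 ≤ ∫ ω, g ω ∂P := by
      apply integral_nonneg
      intro ω
      rw [hg]
      exact Set.indicator_nonneg (fun ω _ => (Real.exp_pos _).le) ω
    -- combine
    have hprod : ∀ ω, (A i).indicator (fun ω => rexp (a * X m ω)) ω = h ω * g ω := by
      intro ω
      simp only [hg, hh, Set.indicator_apply]
      by_cases hω : ω ∈ A i
      · rw [if_pos hω, if_pos hω, ← Real.exp_add]
        congr 1
        ring
      · rw [if_neg hω, if_neg hω, mul_zero]
    calc rexp (a * a) * (P (A i)).toReal
        ≤ ∫ ω, g ω ∂P := hintg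
      _ ≤ (∫ ω, h ω ∂P) * ∫ ω, g ω ∂P := le_mul_of_one_le_left hintg0 hinth1
      _ = ∫ ω, h ω * g ω ∂P := (hIndep.integral_fun_mul_eq_mul_integral hInth.aestronglyMeasurable
            (((hmeas i).const_mul a).exp.indicator (hAmeas i)).aestronglyMeasurable).symm
      _ = ∫ ω in A i, rexp (a * X m ω) ∂P := by
          rw [← integral_indicator (hAmeas i)]
          exact integral_congr_ae (Filter.Eventually.of_forall fun ω => (hprod ω).symm)
  -- sum up
  have hsum : ∑ i ∈ Finset.range (m+1), ∫ ω in A i, rexp (a * X m ω) ∂P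
      = ∫ ω in ⋃ i ∈ Finset.range (m+1), A i, rexp (a * X m ω) ∂P := by
    exact (integral_biUnion_finset (Finset.range (m+1)) (fun i _ => hAmeas i)
      (fun i _ j _ hij => hdisj i j hij) (fun i _ => hfint.integrableOn)).symm
  have hle1 : ∫ ω in ⋃ i ∈ Finset.range (m+1), A i, rexp (a * X m ω) ∂P
      ≤ rexp (a ^ 2 / 2) := by
    calc ∫ ω in ⋃ i ∈ Finset.range (m+1), A i, rexp (a * X m ω) ∂P
        ≤ ∫ ω, rexp (a * X m ω) ∂P :=
          setIntegral_le_integral hfint (Filter.Eventually.of_forall hf0)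
      _ = rexp ((vm:ℝ) * a ^ 2 / 2) := hintlemma
      _ ≤ rexp (a ^ 2 / 2) := by
          apply Real.exp_le_exp.2
          rw [div_le_div_iff_of_pos_right (by norm_num : (0:ℝ) < 2)] at *
          nlinarith [sq_nonneg a]
  have hmeassum : (P {ω | ∃ i ≤ m, a < X i ω}).toReal
      = ∑ i ∈ Finset.range (m+1), (P (A i)).toReal := by
    rw [hcover, measure_biUnion_finset (fun i _ j _ hij => hdisj i j hij)
      (fun i _ => hAmeas i), ENNReal.toReal_sum (fun i _ => measure_ne_top P _)]
  have hfinal : rexp (a * a) * (P {ω | ∃ i ≤ m, a < X i ω}).toReal ≤ rexp (a ^ 2 / 2) := by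
    rw [hmeassum, Finset.mul_sum]
    calc ∑ i ∈ Finset.range (m+1), rexp (a * a) * (P (A i)).toReal
        ≤ ∑ i ∈ Finset.range (m+1), ∫ ω in A i, rexp (a * X m ω) ∂P :=
          Finset.sum_le_sum (fun i hi => hpiece i (Nat.lt_succ_iff.1 (Finset.mem_range.1 hi)))
      _ = _ := hsum
      _ ≤ _ := hle1
  have hexp : rexp (-a^2/2) = rexp (a^2/2) / rexp (a * a) := by
    rw [← Real.exp_sub]
    congr 1
    ring
  rw [hexp, le_div_iff₀ (Real.exp_pos _)]
  linarith [hfinal]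

open Real in
lemma grid_one_sided {Ω : Type*} [MeasurableSpace Ω] (P : Measure Ω) [IsProbabilityMeasure P]
    (W : Ω → ℝ → ℝ) (hW : IsStandardBM P W) (u : ℕ → ℝ) (hu : Monotone u)
    (humem : ∀ i, u i ∈ Icc (0:ℝ) 1) (hu0 : u 0 = 0)
    (c : ℝ) (hc : c = 1 ∨ c = -1) (m : ℕ) (a : ℝ) (ha : 0 ≤ a) :
    (P {ω | ∃ i ≤ m, a < c * W ω (u i)}).toReal ≤ rexp (-a^2/2) := by
  have hc2 : (⟨c^2, sq_nonneg c⟩ : ℝ≥0) = 1 := by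
    ext
    rcases hc with h | h <;> simp [h]
  apply maximal_gauss P (fun i ω => c * W ω (u i))
    (fun i => (hW.meas (u i)).const_mul c)
    (fun ω => by show c * W ω (u 0) = 0; rw [hu0, hW.start, mul_zero])
    ?_ ?_ m a ha
  · intro i j hij
    refine ⟨(u j - u i).toNNReal, ?_, ?_⟩
    · rw [Real.coe_toNNReal']
      have h1 : u j ≤ 1 := (humem j).2
      have h2 : 0 ≤ u i := (humem i).1
      exact max_le (by linarith) zero_le_one
    · have hmap := hW.gauss (u i) (u j) (humem i).1 (hu hij) (humem j).2
      have heq : (fun ω => c * W ω (u j) - c * W ω (u i))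
          = (fun x => c * x) ∘ (fun ω => W ω (u j) - W ω (u i)) := by
        funext ω; simp [mul_sub]
      rw [heq, ← Measure.map_map (show Measurable (fun x : ℝ => c * x) from
        measurable_id.const_mul c) (show Measurable (fun ω => W ω (u j) - W ω (u i)) from
          (hW.meas (u j)).sub (hW.meas (u i))), hmap]
      rw [show (fun x => c * x) = (c * ·) from rfl, gaussianReal_map_const_mul c,
        mul_zero]
      congr 1
      ext
      rcases hc with h | h <;> simp [h]
  · have base := (hW.indep u hu humem).comp (fun _ => fun x : ℝ => c * x)
      (fun _ => measurable_id.const_mul c)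
    have : (fun (i : ℕ) => (fun x : ℝ => c * x) ∘ fun ω => W ω (u (i + 1)) - W ω (u i))
        = fun (i : ℕ) ω => c * W ω (u (i+1)) - c * W ω (u i) := by
      funext i ω; simp [Function.comp, mul_sub]
    rwa [this] at base

open Real in
lemma grid_abs {Ω : Type*} [MeasurableSpace Ω] (P : Measure Ω) [IsProbabilityMeasure P]
    (W : Ω → ℝ → ℝ) (hW : IsStandardBM P W) (u : ℕ → ℝ) (hu : Monotone u)
    (humem : ∀ i, u i ∈ Icc (0:ℝ) 1) (hu0 : u 0 = 0) (m : ℕ) (a : ℝ) (ha : 0 ≤ a) :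
    (P {ω | ∃ i ≤ m, a < |W ω (u i)|}).toReal ≤ 2 * rexp (-a^2/2) := by
  set s1 : Set Ω := {ω | ∃ i ≤ m, a < W ω (u i)} with hs1
  set s2 : Set Ω := {ω | ∃ i ≤ m, a < -W ω (u i)} with hs2
  have hsub : {ω | ∃ i ≤ m, a < |W ω (u i)|} ⊆ s1 ∪ s2 := by
    rintro ω ⟨i, him, hi⟩
    rcases lt_abs.1 hi with h | h
    · exact Or.inl ⟨i, him, h⟩
    · exact Or.inr ⟨i, him, h⟩
  have h1 : (P s1).toReal ≤ rexp (-a^2/2) := by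
    have := grid_one_sided P W hW u hu humem hu0 1 (Or.inl rfl) m a ha
    simpa using this
  have h2 : (P s2).toReal ≤ rexp (-a^2/2) := by
    have := grid_one_sided P W hW u hu humem hu0 (-1) (Or.inr rfl) m a ha
    simpa [neg_one_mul] using this
  calc (P {ω | ∃ i ≤ m, a < |W ω (u i)|}).toReal
      ≤ ((P s1) + (P s2)).toReal := by
        apply ENNReal.toReal_mono
        · exact ENNReal.add_ne_top.2 ⟨measure_ne_top P _, measure_ne_top P _⟩
        · exact le_trans (measure_mono hsub) (measure_union_le _ _)
    _ = (P s1).toReal + (P s2).toReal :=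
        ENNReal.toReal_add (measure_ne_top P _) (measure_ne_top P _)
    _ ≤ rexp (-a^2/2) + rexp (-a^2/2) := add_le_add h1 h2
    _ = 2 * rexp (-a^2/2) := by ring

lemma lcmaj_facts (G : ℝ → ℝ) (hG : ContinuousOn G (Icc 0 1)) (t : ℝ) (ht : t ∈ Icc (0:ℝ) 1) :
    G t ≤ lcmaj G 0 1 t ∧ lcmaj G 0 1 t ≤ sSup ((fun s => |G s|) '' Icc (0:ℝ) 1) := by
  set M := sSup ((fun s => |G s|) '' Icc (0:ℝ) 1) with hM
  have hbdd : BddAbove ((fun s => |G s|) '' Icc (0:ℝ) 1) :=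
    IsCompact.bddAbove_image isCompact_Icc hG.abs
  have hMle : ∀ s ∈ Icc (0:ℝ) 1, |G s| ≤ M := fun s hs => le_csSup hbdd ⟨s, hs, rfl⟩
  have hmem : M ∈ {y : ℝ | ∃ h : ℝ → ℝ, ConcaveOn ℝ (Icc 0 1) h ∧
      (∀ x ∈ Icc 0 1, G x ≤ h x) ∧ y = h t} :=
    ⟨fun _ => M, concaveOn_const M (convex_Icc 0 1),
      fun x hx => (le_abs_self _).trans (hMle x hx), rfl⟩
  have hlb : ∀ y ∈ {y : ℝ | ∃ h : ℝ → ℝ, ConcaveOn ℝ (Icc 0 1) h ∧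
      (∀ x ∈ Icc 0 1, G x ≤ h x) ∧ y = h t}, G t ≤ y := by
    rintro y ⟨h, _, hd, rfl⟩
    exact hd t ht
  exact ⟨le_csInf ⟨M, hmem⟩ hlb, csInf_le ⟨G t, hlb⟩ hmem⟩

lemma lcmGap_facts (G : ℝ → ℝ) (hG : ContinuousOn G (Icc 0 1)) :
    0 ≤ lcmGap G 0 1 ∧ lcmGap G 0 1 ≤ 2 * sSup ((fun s => |G s|) '' Icc (0:ℝ) 1) := by
  set M := sSup ((fun s => |G s|) '' Icc (0:ℝ) 1) with hM
  have hbdd : BddAbove ((fun s => |G s|) '' Icc (0:ℝ) 1) :=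
    IsCompact.bddAbove_image isCompact_Icc hG.abs
  have hMle : ∀ s ∈ Icc (0:ℝ) 1, |G s| ≤ M := fun s hs => le_csSup hbdd ⟨s, hs, rfl⟩
  have hub : ∀ y ∈ (fun t => lcmaj G 0 1 t - G t) '' Icc (0:ℝ) 1, y ≤ 2 * M := by
    rintro y ⟨t, ht, rfl⟩
    have h1 := (lcmaj_facts G hG t ht).2
    have h2 : -G t ≤ M := (neg_le_abs _).trans (hMle t ht)
    simp only
    linarith
  have hbdd2 : BddAbove ((fun t => lcmaj G 0 1 t - G t) '' Icc (0:ℝ) 1) := ⟨2 * M, hub⟩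
  have h0mem : (0:ℝ) ∈ Icc (0:ℝ) 1 := ⟨le_rfl, zero_le_one⟩
  constructor
  · have h01 := (lcmaj_facts G hG 0 h0mem).1
    have : lcmaj G 0 1 0 - G 0 ≤ lcmGap G 0 1 := le_csSup hbdd2 ⟨0, h0mem, rfl⟩
    linarith
  · exact csSup_le ⟨lcmaj G 0 1 0 - G 0, ⟨0, h0mem, rfl⟩⟩ hub

/-- dense sequence in `[0,1]` -/
def dseq (n : ℕ) : ℝ := min 1 ((Nat.unpair n).1 / ((Nat.unpair n).2 + 1))

lemma dseq_mem (n : ℕ) : dseq n ∈ Icc (0:ℝ) 1 :=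
  ⟨le_min zero_le_one (by positivity), min_le_left _ _⟩

lemma dseq_approx (t : ℝ) (ht : t ∈ Icc (0:ℝ) 1) (ε : ℝ) (hε : 0 < ε) :
    ∃ n, |dseq n - t| < ε := by
  obtain ⟨m, hm⟩ := exists_nat_gt (1/ε)
  set k := ⌊t * (m+1)⌋₊ with hk
  refine ⟨Nat.pair k m, ?_⟩
  have hmpos : (0:ℝ) < m + 1 := by positivity
  have hx1 : (k:ℝ) ≤ t * (m+1) := Nat.floor_le (by
    have := ht.1; positivity)
  have hx2 : t * (m+1) < k + 1 := Nat.lt_floor_add_one _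
  have hxle : (k:ℝ)/(m+1) ≤ t := by rw [div_le_iff₀ hmpos]; linarith
  have hgt : t - (k:ℝ)/(m+1) < 1/(m+1) := by
    rw [sub_lt_iff_lt_add, ← add_div, lt_div_iff₀ hmpos]
    linarith
  have hd : dseq (Nat.pair k m) = (k:ℝ)/(m+1) := by
    rw [dseq, Nat.unpair_pair]
    exact min_eq_right (hxle.trans ht.2)
  rw [hd, abs_of_nonpos (by linarith), neg_sub]
  have h1me : 1/(m+1) < ε := by
    rw [div_lt_iff₀ hmpos]
    rw [div_lt_iff₀ hε] at hm
    nlinarith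
  linarith

/-- if a continuous-on-Icc function exceeds `a` somewhere in `Icc 0 1`,
it exceeds `a` at some `dseq n`. -/
lemma exceeds_at_dseq (f : ℝ → ℝ) (hf : ContinuousOn f (Icc 0 1)) (a : ℝ)
    (t : ℝ) (ht : t ∈ Icc (0:ℝ) 1) (hta : a < f t) : ∃ n, a < f (dseq n) := by
  have hsel : ∀ k : ℕ, ∃ n, |dseq n - t| < 1 / (k + 1) :=
    fun k => dseq_approx t ht _ (by positivity)
  choose s hs using hsel
  have htend : Filter.Tendsto (fun k => dseq (s k)) Filter.atTop (nhds t) := by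
    rw [Metric.tendsto_atTop]
    intro ε hε
    obtain ⟨N, hN⟩ := exists_nat_gt (1 / ε)
    refine ⟨N, fun k hk => ?_⟩
    rw [Real.dist_eq]
    refine lt_of_lt_of_le (hs k) ?_
    rw [div_le_iff₀ (by positivity)]
    rw [div_lt_iff₀ hε] at hN
    have : (N : ℝ) ≤ k + 1 := by exact_mod_cast Nat.le_succ_of_le hk
    nlinarith
  have htendw : Filter.Tendsto (fun k => dseq (s k)) Filter.atTop (nhdsWithin t (Icc 0 1)) :=
    tendsto_nhdsWithin_of_tendsto_nhds_of_eventually_within _ htend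
      (Filter.Eventually.of_forall fun k => dseq_mem (s k))
  have hftend : Filter.Tendsto (fun k => f (dseq (s k))) Filter.atTop (nhds (f t)) :=
    ((hf t ht).tendsto).comp htendw
  have : ∀ᶠ k in Filter.atTop, f (dseq (s k)) ∈ Ioi a :=
    hftend.eventually (isOpen_Ioi.mem_nhds hta)
  obtain ⟨k, hk⟩ := this.exists
  exact ⟨s k, hk⟩

lemma exists_grid (m : ℕ) : ∃ (u : ℕ → ℝ) (M : ℕ), Monotone u ∧ (∀ i, u i ∈ Icc (0:ℝ) 1) ∧
    u 0 = 0 ∧ ∀ n ≤ m, ∃ i ≤ M, u i = dseq n := by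
  classical
  set F : Finset ℝ := insert 0 ((Finset.range (m+1)).image dseq) with hF
  have hFmem : ∀ x ∈ F, x ∈ Icc (0:ℝ) 1 := by
    intro x hx
    rw [hF, Finset.mem_insert] at hx
    rcases hx with rfl | hx
    · exact ⟨le_rfl, zero_le_one⟩
    · obtain ⟨n, _, rfl⟩ := Finset.mem_image.1 hx
      exact dseq_mem n
  set L := F.sort (· ≤ ·) with hL
  have hsorted : L.Pairwise (· ≤ ·) := Finset.pairwise_sort _ _
  have hmemL : ∀ x : ℝ, x ∈ L ↔ x ∈ F := fun x => Finset.mem_sort _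
  have hlen : 0 < L.length := by
    rw [hL, Finset.length_sort]
    exact Finset.card_pos.2 ⟨0, Finset.mem_insert_self _ _⟩
  set u : ℕ → ℝ := fun i => if h : i < L.length then L.get ⟨i, h⟩ else 1 with hu
  have huget : ∀ (i : ℕ) (h : i < L.length), u i = L.get ⟨i, h⟩ := by
    intro i h
    rw [hu]
    simp [h]
  have hu1 : ∀ i, ¬ i < L.length → u i = 1 := by
    intro i h
    rw [hu]
    simp [h]
  have huIcc : ∀ i, u i ∈ Icc (0:ℝ) 1 := by
    intro i
    by_cases h : i < L.length
    · rw [huget i h]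
      exact hFmem _ ((hmemL _).1 (L.get_mem _))
    · rw [hu1 i h]
      exact ⟨zero_le_one, le_rfl⟩
  refine ⟨u, L.length, ?_, huIcc, ?_, ?_⟩
  · intro i j hij
    by_cases hj : j < L.length
    · have hi : i < L.length := lt_of_le_of_lt hij hj
      rw [huget i hi, huget j hj]
      exact List.Pairwise.rel_get_of_le hsorted hij
    · rw [hu1 j hj]
      exact (huIcc i).2
  · have h0L : (0:ℝ) ∈ L := (hmemL 0).2 (Finset.mem_insert_self _ _)
    obtain ⟨idx, hidx⟩ := List.mem_iff_get.1 h0L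
    have h1 : L.get ⟨0, hlen⟩ ≤ L.get idx :=
      List.Pairwise.rel_get_of_le hsorted (Fin.mk_le_mk.2 (Nat.zero_le _))
    have h2 : (0:ℝ) ≤ L.get ⟨0, hlen⟩ := (hFmem _ ((hmemL _).1 (L.get_mem _))).1
    rw [huget 0 hlen]
    rw [hidx] at h1
    linarith
  · intro n hn
    have : dseq n ∈ L := (hmemL _).2 (Finset.mem_insert_of_mem
      (Finset.mem_image.2 ⟨n, Finset.mem_range.2 (Nat.lt_succ_of_le hn), rfl⟩))
    obtain ⟨idx, hidx⟩ := List.mem_iff_get.1 this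
    exact ⟨idx.1, le_of_lt idx.2, by rw [huget idx.1 idx.2]; exact hidx ▸ rfl⟩

open Real in
lemma Zvar_tail {Ω : Type*} [MeasurableSpace Ω] (P : Measure Ω) [IsProbabilityMeasure P]
    (W : Ω → ℝ → ℝ) (hW : IsStandardBM P W) (x : ℝ) (hx : 0 ≤ x) :
    (P {ω | x < Zvar W ω}).toReal ≤ 2 * rexp (-x ^ 2 / 8) := by
  set B : ℕ → Set Ω := fun m => {ω | ∃ n ≤ m, x/2 < |W ω (dseq n)|} with hB
  have hBmono : Monotone B := by
    intro m m' hmm ω hω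
    obtain ⟨n, hn, h⟩ := hω
    exact ⟨n, hn.trans hmm, h⟩
  have hsub : {ω | x < Zvar W ω} ⊆ ⋃ m, B m := by
    intro ω hω
    have hcont := hW.cont ω
    have hfacts := lcmGap_facts (W ω) hcont
    have hZ : x < 2 * sSup ((fun s => |W ω s|) '' Icc (0:ℝ) 1) :=
      lt_of_lt_of_le hω hfacts.2
    have hhalf : x/2 < sSup ((fun s => |W ω s|) '' Icc (0:ℝ) 1) := by linarith
    have hne : ((fun s => |W ω s|) '' Icc (0:ℝ) 1).Nonempty :=
      ⟨|W ω 0|, ⟨0, ⟨le_rfl, zero_le_one⟩, rfl⟩⟩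
    obtain ⟨y, ⟨t, ht, rfl⟩, hy⟩ := exists_lt_of_lt_csSup hne hhalf
    obtain ⟨n, hn⟩ := exceeds_at_dseq (fun s => |W ω s|) hcont.abs (x/2) t ht hy
    exact Set.mem_iUnion.2 ⟨n, ⟨n, le_rfl, hn⟩⟩
  have hBbound : ∀ m, P (B m) ≤ ENNReal.ofReal (2 * rexp (-x ^ 2 / 8)) := by
    intro m
    obtain ⟨u, M, hum, huI, hu0, hcov⟩ := exists_grid m
    have hsub2 : B m ⊆ {ω | ∃ i ≤ M, x/2 < |W ω (u i)|} := by
      rintro ω ⟨n, hn, h⟩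
      obtain ⟨i, hi, hui⟩ := hcov n hn
      exact ⟨i, hi, by rw [hui]; exact h⟩
    have hgrid := grid_abs P W hW u hum huI hu0 M (x/2) (by linarith)
    have hexp : 2 * rexp (-(x/2)^2/2) = 2 * rexp (-x ^ 2 / 8) := by
      congr 1
      ring_nf
    calc P (B m) ≤ P {ω | ∃ i ≤ M, x/2 < |W ω (u i)|} := measure_mono hsub2
      _ ≤ ENNReal.ofReal (2 * rexp (-x ^ 2 / 8)) := by
          refine (ENNReal.le_ofReal_iff_toReal_le (measure_ne_top P _) (by positivity)).2 ?_
          rw [← hexp]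
          exact hgrid
  have hfin : P {ω | x < Zvar W ω} ≤ ENNReal.ofReal (2 * rexp (-x ^ 2 / 8)) := by
    calc P {ω | x < Zvar W ω} ≤ P (⋃ m, B m) := measure_mono hsub
      _ = ⨆ m, P (B m) := (hBmono.directed_le).measure_iUnion
      _ ≤ ENNReal.ofReal (2 * rexp (-x ^ 2 / 8)) := iSup_le hBbound
  exact ENNReal.toReal_le_of_le_ofReal (by positivity) hfin

theorem statement_4 {Ω : Type*} [MeasurableSpace Ω] (P : Measure Ω) [IsProbabilityMeasure P]
    (W : Ω → ℝ → ℝ) (hW : IsStandardBM P W) :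
    (∀ x : ℝ, 0 ≤ x → (P {ω | x < Zvar W ω}).toReal ≤ 2 * Real.exp (-x ^ 2 / 8)) ∧
    ∀ γ ∈ Ioo (0:ℝ) 1,
      quantile P (Zvar W) (1 - γ) ≤ 2 * Real.sqrt (2 * Real.log (2 / γ)) := by
  refine ⟨fun x hx => Zvar_tail P W hW x hx, ?_⟩
  intro γ hγ
  obtain ⟨hγ0, hγ1⟩ := hγ
  set r : ℝ := 2 * Real.sqrt (2 * Real.log (2 / γ)) with hr
  have hr0 : 0 ≤ r := by positivity
  by_cases hm : AEMeasurable (Zvar W) P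
  · have hlog : 0 ≤ Real.log (2 / γ) := Real.log_nonneg (by
      rw [le_div_iff₀ hγ0]; linarith)
    have hr2 : -r ^ 2 / 8 = -Real.log (2 / γ) := by
      rw [hr, mul_pow, Real.sq_sqrt (by linarith)]
      ring
    have hγtail : (P {ω | r < Zvar W ω}).toReal ≤ γ := by
      have := Zvar_tail P W hW r hr0
      rw [hr2, Real.exp_neg, Real.exp_log (by positivity)] at this
      calc (P {ω | r < Zvar W ω}).toReal ≤ 2 * (2 / γ)⁻¹ := this
        _ = γ := by field_simp
    have hEtail : P {ω | r < Zvar W ω} ≤ ENNReal.ofReal γ :=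
      (ENNReal.le_ofReal_iff_toReal_le (measure_ne_top P _) hγ0.le).2 hγtail
    have hmapP : IsProbabilityMeasure (P.map (Zvar W)) := Measure.isProbabilityMeasure_map hm
    have hIoi : (P.map (Zvar W)) (Ioi r) = P {ω | r < Zvar W ω} := by
      rw [Measure.map_apply_of_aemeasurable hm measurableSet_Ioi]
      rfl
    have hIic : ENNReal.ofReal (1 - γ) ≤ (P.map (Zvar W)) (Iic r) := by
      have hc : (P.map (Zvar W)) (Iic r) = 1 - (P.map (Zvar W)) (Ioi r) := by
        rw [← Set.compl_Ioi, measure_compl measurableSet_Ioi (measure_ne_top _ _),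
          measure_univ]
      rw [hc, hIoi]
      calc ENNReal.ofReal (1 - γ) = ENNReal.ofReal 1 - ENNReal.ofReal γ :=
            ENNReal.ofReal_sub 1 hγ0.le
        _ = 1 - ENNReal.ofReal γ := by rw [ENNReal.ofReal_one]
        _ ≤ 1 - P {ω | r < Zvar W ω} := tsub_le_tsub_left hEtail 1
    have hbdd : BddBelow {x : ℝ | ENNReal.ofReal (1 - γ) ≤ (P.map (Zvar W)) (Iic x)} := by
      refine ⟨-1, fun y hy => ?_⟩
      by_contra hy'
      push_neg at hy'
      have hZnn : ∀ ω, 0 ≤ Zvar W ω := fun ω => (lcmGap_facts (W ω) (hW.cont ω)).1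
      have hIicm : (P.map (Zvar W)) (Iic y) = 0 := by
        rw [Measure.map_apply_of_aemeasurable hm measurableSet_Iic]
        have : (Zvar W) ⁻¹' (Iic y) = ∅ := by
          ext ω
          simp only [Set.mem_preimage, Set.mem_Iic, Set.mem_empty_iff_false, iff_false, not_le]
          exact lt_of_lt_of_le (lt_of_lt_of_le hy' (by linarith)) (hZnn ω)
        rw [this, measure_empty]
      simp only [Set.mem_setOf_eq] at hy
      rw [hIicm, nonpos_iff_eq_zero, ENNReal.ofReal_eq_zero] at hy
      linarith
    exact csInf_le hbdd hIic
  · rw [quantile, mQuantile, Measure.map_of_not_aemeasurable hm]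
    have hempty : {x : ℝ | ENNReal.ofReal (1 - γ) ≤ (0 : Measure ℝ) (Iic x)} = ∅ := by
      ext y
      simp only [Measure.coe_zero, Pi.zero_apply, nonpos_iff_eq_zero, ENNReal.ofReal_eq_zero,
        Set.mem_setOf_eq, Set.mem_empty_iff_false, iff_false]
      intro h
      linarith
    rw [hempty, Real.sInf_empty]
    exact hr0

end
end

section
/- Let R > 0 and s ∈ (0,1], and let f : [0,1] → ℝ be integrable with f(u) − f(v) ≤ R(u−v)^s for all 0 ≤ v ≤ u ≤ 1. Let x₀ < y₀ in [0,1] be such that ρ := f(y₀) − f(x₀) > 0. Then there exist a constant C(s) > 0 depending only on s and an interval [x,y] ⊆ [x₀,y₀] with x < y such that sup_{t∈[x,y]} ((t−x)/√(y−x)) (f̄_{xy} − f̄_{xt}) ≥ C(s) R^{−1/(2s)} ρ^{1+1/(2s)}. -/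
open MeasureTheory ProbabilityTheory Set

noncomputable section

set_option maxHeartbeats 1000000 in
theorem statement_14 (s : ℝ) (hs : s ∈ Ioc (0:ℝ) 1) :
    ∃ C : ℝ, 0 < C ∧ ∀ R : ℝ, 0 < R → ∀ f : ℝ → ℝ, IntegrableOn f (Icc 0 1) →
      (∀ u ∈ Icc (0:ℝ) 1, ∀ v ∈ Icc (0:ℝ) 1, v ≤ u → f u - f v ≤ R * (u - v) ^ s) →
      ∀ x₀ y₀ : ℝ, 0 ≤ x₀ → x₀ < y₀ → y₀ ≤ 1 → 0 < f y₀ - f x₀ →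
      ∃ x y : ℝ, x₀ ≤ x ∧ x < y ∧ y ≤ y₀ ∧
        C * R ^ (-(1:ℝ) / (2 * s)) * (f y₀ - f x₀) ^ (1 + 1 / (2 * s)) ≤
          sSup ((fun t => (t - x) / Real.sqrt (y - x) * (fbar f x y - fbar f x t)) ''
            Icc x y) := by
  obtain ⟨hs0, hs1⟩ := hs
  have hsne : s ≠ 0 := ne_of_gt hs0
  refine ⟨1/32 * (8:ℝ) ^ (-(1:ℝ) / (2 * s)), by positivity, ?_⟩
  intro R hR f hfInt hHold x₀ y₀ hx₀ hxy hy₀ hρ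
  by_contra hcon
  push_neg at hcon
  set ρ : ℝ := f y₀ - f x₀ with hρdef
  set L : ℝ := y₀ - x₀ with hLdef
  have hL : 0 < L := sub_pos.mpr hxy
  set Λ : ℝ := (ρ / (8 * R)) ^ (1/s : ℝ) with hΛdef
  have hρ8R : (0:ℝ) < ρ / (8 * R) := by positivity
  have hΛpos : 0 < Λ := Real.rpow_pos_of_pos hρ8R _
  have hΛs : Λ ^ s = ρ / (8 * R) := by
    rw [hΛdef, ← Real.rpow_mul hρ8R.le]
    rw [show (1/s) * s = 1 by field_simp]
    exact Real.rpow_one _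
  have hRΛs : R * Λ ^ s = ρ / 8 := by rw [hΛs]; field_simp
  -- membership helper
  have hIcc : ∀ u, x₀ ≤ u → u ≤ y₀ → u ∈ Icc (0:ℝ) 1 :=
    fun u h1 h2 => ⟨le_trans hx₀ h1, le_trans h2 hy₀⟩
  -- integrability helpers
  have hII : ∀ u v, x₀ ≤ u → u ≤ v → v ≤ y₀ → IntervalIntegrable f volume u v := by
    intro u v h1 h2 h3
    rw [intervalIntegrable_iff]
    refine hfInt.mono_set ?_
    rw [uIoc_of_le h2]
    exact subset_trans Ioc_subset_Icc_self
      (Icc_subset_Icc (le_trans hx₀ h1) (le_trans h3 hy₀))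
  have hIIabs : ∀ u v, x₀ ≤ u → u ≤ v → v ≤ y₀ →
      IntervalIntegrable (fun w => |f w|) volume u v := by
    intro u v h1 h2 h3
    rw [intervalIntegrable_iff]
    have habs : IntegrableOn (fun w => |f w|) (Icc (0:ℝ) 1) := by
      have := hfInt.norm; simp only [Real.norm_eq_abs] at this; exact this
    refine habs.mono_set ?_
    rw [uIoc_of_le h2]
    exact subset_trans Ioc_subset_Icc_self
      (Icc_subset_Icc (le_trans hx₀ h1) (le_trans h3 hy₀))
  -- Λ < L
  have hρRL : ρ ≤ R * L ^ s := by
    have := hHold y₀ (hIcc y₀ hxy.le le_rfl) x₀ (hIcc x₀ le_rfl hxy.le) hxy.le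
    simpa [hρdef, hLdef] using this
  have hΛL : Λ < L := by
    by_contra h
    push_neg at h
    have h1 : L ^ s ≤ Λ ^ s := Real.rpow_le_rpow hL.le h hs0.le
    have h2 : R * L ^ s ≤ ρ / 8 := by
      rw [← hRΛs]; exact mul_le_mul_of_nonneg_left h1 hR.le
    linarith
  -- the target T
  set T : ℝ := 1/32 * ρ * Real.sqrt Λ with hTdef
  have hTpos : 0 < T := by
    rw [hTdef]; positivity
  have hTeq : 1/32 * (8:ℝ) ^ (-(1:ℝ) / (2 * s)) * R ^ (-(1:ℝ) / (2 * s))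
      * ρ ^ (1 + 1 / (2 * s)) = T := by
    have h1 : Real.sqrt Λ = (ρ / (8 * R)) ^ (1/(2*s) : ℝ) := by
      rw [Real.sqrt_eq_rpow, hΛdef, ← Real.rpow_mul hρ8R.le]
      congr 1
      ring
    have h2 : (ρ / (8 * R)) ^ (1/(2*s) : ℝ)
        = ρ ^ (1/(2*s) : ℝ) / ((8:ℝ) ^ (1/(2*s) : ℝ) * R ^ (1/(2*s) : ℝ)) := by
      rw [Real.div_rpow hρ.le (by positivity), Real.mul_rpow (by norm_num) hR.le]
    have h3 : ρ ^ (1 + 1 / (2 * s)) = ρ * ρ ^ (1/(2*s) : ℝ) := by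
      rw [Real.rpow_add hρ, Real.rpow_one]
    have h4 : (8:ℝ) ^ (-(1:ℝ) / (2 * s)) = ((8:ℝ) ^ (1/(2*s) : ℝ))⁻¹ := by
      rw [neg_div, Real.rpow_neg (by norm_num)]
    have h5 : R ^ (-(1:ℝ) / (2 * s)) = (R ^ (1/(2*s) : ℝ))⁻¹ := by
      rw [neg_div, Real.rpow_neg hR.le]
    have h8 : (0:ℝ) < (8:ℝ) ^ (1/(2*s) : ℝ) := Real.rpow_pos_of_pos (by norm_num) _
    have hRp : (0:ℝ) < R ^ (1/(2*s) : ℝ) := Real.rpow_pos_of_pos hR _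
    rw [hTdef, h1, h2, h3, h4, h5]
    field_simp
  rw [hTeq] at hcon
  -- (t-x) * fbar f x t = ∫
  have hfbart : ∀ x t : ℝ, x ≤ t → (t - x) * fbar f x t = ∫ u in x..t, f u := by
    intro x t h
    rcases eq_or_lt_of_le h with h | h
    · simp [fbar, ← h]
    · have : t - x ≠ 0 := by linarith
      rw [fbar, ← mul_assoc, mul_inv_cancel₀ this, one_mul]
  -- boundedness of sup sets
  have hbdd : ∀ x y, x₀ ≤ x → x < y → y ≤ y₀ →
      BddAbove ((fun t => (t - x) / Real.sqrt (y - x) * (fbar f x y - fbar f x t)) ''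
        Icc x y) := by
    intro x y hx hxy' hy
    have hsq : 0 < Real.sqrt (y - x) := Real.sqrt_pos.mpr (sub_pos.mpr hxy')
    refine ⟨((y - x) * |fbar f x y| + ∫ u in x..y, |f u|) / Real.sqrt (y - x), ?_⟩
    rintro _ ⟨t, ⟨ht1, ht2⟩, rfl⟩
    dsimp only
    have heq : (t - x) / Real.sqrt (y - x) * (fbar f x y - fbar f x t)
        = ((t - x) * fbar f x y - ∫ u in x..t, f u) / Real.sqrt (y - x) := by
      rw [← hfbart x t ht1]; ring
    rw [heq]
    gcongr ?_ / _
    have hb1 : (t - x) * fbar f x y ≤ (y - x) * |fbar f x y| := by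
      calc (t - x) * fbar f x y ≤ (t - x) * |fbar f x y| :=
            mul_le_mul_of_nonneg_left (le_abs_self _) (by linarith)
        _ ≤ (y - x) * |fbar f x y| :=
            mul_le_mul_of_nonneg_right (by linarith) (abs_nonneg _)
    have hb2 : -(∫ u in x..t, f u) ≤ ∫ u in x..y, |f u| := by
      have e1 : -(∫ u in x..t, f u) ≤ |∫ u in x..t, f u| := neg_le_abs _
      have e2 : |∫ u in x..t, f u| ≤ ∫ u in x..t, |f u| :=
        intervalIntegral.abs_integral_le_integral_abs ht1
      have e3 : (∫ u in x..t, |f u|) + (∫ u in t..y, |f u|) = ∫ u in x..y, |f u| :=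
        intervalIntegral.integral_add_adjacent_intervals
          (hIIabs x t hx ht1 (le_trans ht2 hy)) (hIIabs t y (le_trans hx ht1) ht2 hy)
      have e4 : 0 ≤ ∫ u in t..y, |f u| :=
        intervalIntegral.integral_nonneg ht2 (fun u _ => abs_nonneg _)
      linarith
    linarith
  -- the key window estimate
  have key : ∀ z ℓ : ℝ, 0 < ℓ → x₀ ≤ z - ℓ → z + ℓ ≤ y₀ →
      (∫ u in z..(z+ℓ), f u) - (∫ u in (z-ℓ)..z, f u) < 2 * Real.sqrt (2*ℓ) * T := by
    intro z ℓ hℓ h1 h2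
    have hxz : z - ℓ < z + ℓ := by linarith
    have hS := hcon (z-ℓ) (z+ℓ) h1 hxz h2
    have hmem : z ∈ Icc (z-ℓ) (z+ℓ) := ⟨by linarith, by linarith⟩
    have hv := le_csSup (hbdd _ _ h1 hxz h2) (mem_image_of_mem _ hmem)
    have hvS := lt_of_le_of_lt hv hS
    have hs2 : 0 < Real.sqrt (2*ℓ) := Real.sqrt_pos.mpr (by linarith)
    have hadd : (∫ u in (z-ℓ)..(z+ℓ), f u)
        = (∫ u in (z-ℓ)..z, f u) + (∫ u in z..(z+ℓ), f u) :=
      (intervalIntegral.integral_add_adjacent_intervals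
        (hII (z-ℓ) z h1 (by linarith) (by linarith))
        (hII z (z+ℓ) (by linarith) (by linarith) h2)).symm
    have hval : (z - (z-ℓ)) / Real.sqrt ((z+ℓ)-(z-ℓ)) * (fbar f (z-ℓ) (z+ℓ) - fbar f (z-ℓ) z)
        = ((∫ u in z..(z+ℓ), f u) - (∫ u in (z-ℓ)..z, f u)) / (2 * Real.sqrt (2*ℓ)) := by
      rw [show (z+ℓ)-(z-ℓ) = 2*ℓ by ring, show z-(z-ℓ) = ℓ by ring]
      simp only [fbar]
      rw [show (z+ℓ)-(z-ℓ) = 2*ℓ by ring, show z-(z-ℓ) = ℓ by ring, hadd]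
      have hℓne : ℓ ≠ 0 := ne_of_gt hℓ
      field_simp
      ring
    rw [hval] at hvS
    calc (∫ u in z..(z+ℓ), f u) - (∫ u in (z-ℓ)..z, f u)
        = ((∫ u in z..(z+ℓ), f u) - (∫ u in (z-ℓ)..z, f u)) / (2*Real.sqrt (2*ℓ))
          * (2*Real.sqrt (2*ℓ)) := by field_simp
      _ < T * (2*Real.sqrt (2*ℓ)) := mul_lt_mul_of_pos_right hvS (by positivity)
      _ = 2 * Real.sqrt (2*ℓ) * T := by ring
  -- dyadic scales
  set ℓk : ℕ → ℝ := fun k => L / 2^k with hℓkdef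
  have hℓpos : ∀ k, 0 < ℓk k := fun k => by
    simp only [hℓkdef]; positivity
  have hℓle : ∀ k, ℓk k ≤ L := by
    intro k
    simp only [hℓkdef]
    apply div_le_self hL.le
    exact one_le_pow₀ (by norm_num)
  have hℓsucc : ∀ k, ℓk k = 2 * ℓk (k+1) := by
    intro k
    simp only [hℓkdef, pow_succ]
    field_simp
  -- the dyadic gap function
  set g : ℕ → ℝ := fun k =>
    (∫ u in (y₀ - ℓk k)..y₀, f u) / ℓk k - (∫ u in x₀..(x₀ + ℓk k), f u) / ℓk k
    with hgdef
  -- step bound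
  have hstep : ∀ k, g (k+1) ≤ g k + 2 * Real.sqrt 2 * T / Real.sqrt (ℓk (k+1)) := by
    intro k
    set ℓ' : ℝ := ℓk (k+1) with hℓ'def
    have hℓ'pos : 0 < ℓ' := hℓpos (k+1)
    have h2ℓ : ℓk k = 2 * ℓ' := hℓsucc k
    have hsub : 2 * ℓ' ≤ L := by rw [← h2ℓ]; exact hℓle k
    have hsub' : 2 * ℓ' ≤ y₀ - x₀ := by rw [← hLdef]; exact hsub
    have hsqℓ' : 0 < Real.sqrt ℓ' := Real.sqrt_pos.mpr hℓ'pos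
    have hsq2 : Real.sqrt (2*ℓ') = Real.sqrt 2 * Real.sqrt ℓ' :=
      Real.sqrt_mul (by norm_num) _
    -- right windows
    have hR1 : (∫ u in (y₀ - 2*ℓ')..y₀, f u)
        = (∫ u in (y₀ - 2*ℓ')..(y₀ - ℓ'), f u) + (∫ u in (y₀ - ℓ')..y₀, f u) :=
      (intervalIntegral.integral_add_adjacent_intervals
        (hII (y₀ - 2*ℓ') (y₀ - ℓ') (by linarith) (by linarith) (by linarith))
        (hII (y₀ - ℓ') y₀ (by linarith) (by linarith) le_rfl)).symm
    have hkR : (∫ u in (y₀ - ℓ')..y₀, f u) - (∫ u in (y₀ - 2*ℓ')..(y₀ - ℓ'), f u)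
        < 2 * Real.sqrt (2*ℓ') * T := by
      have h := key (y₀ - ℓ') ℓ' hℓ'pos (by linarith) (by linarith)
      rw [show y₀ - ℓ' + ℓ' = y₀ by ring, show y₀ - ℓ' - ℓ' = y₀ - 2*ℓ' by ring] at h
      exact h
    -- left windows
    have hL1 : (∫ u in x₀..(x₀ + 2*ℓ'), f u)
        = (∫ u in x₀..(x₀ + ℓ'), f u) + (∫ u in (x₀ + ℓ')..(x₀ + 2*ℓ'), f u) :=
      (intervalIntegral.integral_add_adjacent_intervals
        (hII x₀ (x₀ + ℓ') le_rfl (by linarith) (by linarith))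
        (hII (x₀ + ℓ') (x₀ + 2*ℓ') (by linarith) (by linarith) (by linarith))).symm
    have hkL : (∫ u in (x₀ + ℓ')..(x₀ + 2*ℓ'), f u) - (∫ u in x₀..(x₀ + ℓ'), f u)
        < 2 * Real.sqrt (2*ℓ') * T := by
      have h := key (x₀ + ℓ') ℓ' hℓ'pos (by linarith) (by linarith)
      rw [show x₀ + ℓ' + ℓ' = x₀ + 2*ℓ' by ring, show x₀ + ℓ' - ℓ' = x₀ by ring] at h
      exact h
    -- algebra
    have hgk1 : g (k+1) = (∫ u in (y₀ - ℓ')..y₀, f u) / ℓ'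
        - (∫ u in x₀..(x₀ + ℓ'), f u) / ℓ' := rfl
    have hgk : g k = ((∫ u in (y₀ - 2*ℓ')..(y₀ - ℓ'), f u) + (∫ u in (y₀ - ℓ')..y₀, f u)) / (2*ℓ')
        - ((∫ u in x₀..(x₀ + ℓ'), f u) + (∫ u in (x₀ + ℓ')..(x₀ + 2*ℓ'), f u)) / (2*ℓ') := by
      have e1 : g k = (∫ u in (y₀ - ℓk k)..y₀, f u) / ℓk k
          - (∫ u in x₀..(x₀ + ℓk k), f u) / ℓk k := rfl
      rw [e1, h2ℓ, hR1, hL1]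
    have hdiff : g (k+1) - g k
        = (((∫ u in (y₀ - ℓ')..y₀, f u) - (∫ u in (y₀ - 2*ℓ')..(y₀ - ℓ'), f u))
          + ((∫ u in (x₀ + ℓ')..(x₀ + 2*ℓ'), f u) - (∫ u in x₀..(x₀ + ℓ'), f u))) / (2*ℓ') := by
      rw [hgk1, hgk]
      have hℓ'ne : ℓ' ≠ 0 := ne_of_gt hℓ'pos
      field_simp
      ring
    have hconv : (4 * Real.sqrt (2*ℓ') * T) / (2*ℓ') = 2 * Real.sqrt 2 * T / Real.sqrt ℓ' := by
      rw [hsq2, div_eq_div_iff (by positivity : (2:ℝ)*ℓ' ≠ 0) hsqℓ'.ne']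
      have hself : Real.sqrt ℓ' * Real.sqrt ℓ' = ℓ' := Real.mul_self_sqrt hℓ'pos.le
      linear_combination (4 * Real.sqrt 2 * T) * hself
    have hlt : g (k+1) - g k < 2 * Real.sqrt 2 * T / Real.sqrt ℓ' := by
      rw [hdiff, ← hconv]
      apply (div_lt_div_iff_of_pos_right (by positivity)).mpr
      linarith
    linarith
  -- closed-form bound by induction
  have hsqL : 0 < Real.sqrt L := Real.sqrt_pos.mpr hL
  have hsq2pos : 0 < Real.sqrt 2 := Real.sqrt_pos.mpr (by norm_num)
  have hsqrtℓk : ∀ k, Real.sqrt (ℓk k) * (Real.sqrt 2)^k = Real.sqrt L := by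
    intro k
    have h2k : Real.sqrt ((2:ℝ)^k) = (Real.sqrt 2)^k := by
      induction k with
      | zero => simp
      | succ n ih => rw [pow_succ, pow_succ, Real.sqrt_mul (by positivity), ih]
    rw [← h2k, ← Real.sqrt_mul (hℓpos k).le]
    congr 1
    simp only [hℓkdef]
    field_simp
  have hbound : ∀ n, g n ≤ 10 * T * (Real.sqrt 2)^n / Real.sqrt L := by
    intro n
    induction n with
    | zero =>
      have h0 : g 0 = 0 := by
        have e1 : g 0 = (∫ u in (y₀ - ℓk 0)..y₀, f u) / ℓk 0
            - (∫ u in x₀..(x₀ + ℓk 0), f u) / ℓk 0 := rfl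
        have e2 : ℓk 0 = L := by simp [hℓkdef]
        rw [e1, e2, hLdef]
        rw [show y₀ - (y₀ - x₀) = x₀ by ring, show x₀ + (y₀ - x₀) = y₀ by ring]
        ring
      rw [h0]
      positivity
    | succ n ih =>
      have h1 := hstep n
      have h2 : 2 * Real.sqrt 2 * T / Real.sqrt (ℓk (n+1))
          = 4 * T * (Real.sqrt 2)^n / Real.sqrt L := by
        rw [div_eq_div_iff (Real.sqrt_pos.mpr (hℓpos (n+1))).ne' hsqL.ne']
        rw [← hsqrtℓk (n+1), pow_succ]
        have h22 : Real.sqrt 2 * Real.sqrt 2 = 2 := Real.mul_self_sqrt (by norm_num)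
        linear_combination (2 * T * Real.sqrt (ℓk (n+1)) * (Real.sqrt 2)^n) * h22
      have h3 : 10 * T * (Real.sqrt 2)^n / Real.sqrt L + 4 * T * (Real.sqrt 2)^n / Real.sqrt L
          ≤ 10 * T * (Real.sqrt 2)^(n+1) / Real.sqrt L := by
        rw [← add_div, div_le_div_iff₀ hsqL hsqL, pow_succ]
        have h14 : (14:ℝ) ≤ 10 * Real.sqrt 2 := by
          nlinarith [Real.sq_sqrt (show (0:ℝ) ≤ 2 by norm_num), hsq2pos]
        have h5 := mul_le_mul_of_nonneg_right h14
          (show (0:ℝ) ≤ T * (Real.sqrt 2)^n * Real.sqrt L by positivity)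
        linarith
      calc g (n+1) ≤ g n + 2 * Real.sqrt 2 * T / Real.sqrt (ℓk (n+1)) := h1
        _ ≤ 10 * T * (Real.sqrt 2)^n / Real.sqrt L + 4 * T * (Real.sqrt 2)^n / Real.sqrt L := by
            rw [← h2]; linarith
        _ ≤ 10 * T * (Real.sqrt 2)^(n+1) / Real.sqrt L := h3
  -- choice of K
  have hexK : ∃ k : ℕ, ℓk k ≤ Λ := by
    obtain ⟨n, hn⟩ := pow_unbounded_of_one_lt (L / Λ) (show (1:ℝ) < 2 by norm_num)
    refine ⟨n, ?_⟩
    simp only [hℓkdef]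
    rw [div_le_iff₀ (by positivity)]
    rw [div_lt_iff₀ hΛpos] at hn
    nlinarith [hΛpos]
  have hKspec : ℓk (Nat.find hexK) ≤ Λ := Nat.find_spec hexK
  set K : ℕ := Nat.find hexK with hKdef
  have hKne : K ≠ 0 := by
    intro h
    rw [hKdef] at h
    have h2 : ℓk 0 ≤ Λ := by rw [← h]; exact hKspec
    have h3 : L ≤ Λ := by simpa [hℓkdef] using h2
    linarith
  obtain ⟨m, hm⟩ := Nat.exists_eq_succ_of_ne_zero hKne
  have hKlow : Λ / 2 < ℓk K := by
    have hmin : ¬ (ℓk m ≤ Λ) := Nat.find_min hexK (by omega)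
    push_neg at hmin
    have h2 : ℓk m = 2 * ℓk K := by rw [hm]; exact hℓsucc m
    linarith
  -- lower bound for g K
  have hgK : 3/4 * ρ ≤ g K := by
    have hℓKΛ : ℓk K ≤ Λ := hKspec
    have hℓKpos := hℓpos K
    have hℓKL : ℓk K ≤ L := hℓle K
    have hℓKL' : ℓk K ≤ y₀ - x₀ := by rw [← hLdef]; exact hℓKL
    have hRlow : (f y₀ - ρ/8) * ℓk K ≤ ∫ u in (y₀ - ℓk K)..y₀, f u := by
      have hmono := intervalIntegral.integral_mono_on (μ := volume)
        (f := fun _ => f y₀ - ρ/8) (g := f) (show y₀ - ℓk K ≤ y₀ by linarith)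
        intervalIntegrable_const (hII (y₀ - ℓk K) y₀ (by linarith) (by linarith) le_rfl) ?_
      · simp only [intervalIntegral.integral_const, smul_eq_mul] at hmono
        linarith
      · intro u hu
        obtain ⟨hu1, hu2⟩ := hu
        have hu0 : u ∈ Icc (0:ℝ) 1 := hIcc u (by linarith) hu2
        have hh := hHold y₀ (hIcc y₀ hxy.le le_rfl) u hu0 hu2
        have hpow : (y₀ - u) ^ s ≤ Λ ^ s :=
          Real.rpow_le_rpow (by linarith) (by linarith) hs0.le
        have hRu : R * (y₀ - u) ^ s ≤ ρ / 8 := by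
          rw [← hRΛs]; exact mul_le_mul_of_nonneg_left hpow hR.le
        linarith
    have hLhigh : (∫ u in x₀..(x₀ + ℓk K), f u) ≤ (f x₀ + ρ/8) * ℓk K := by
      have hmono := intervalIntegral.integral_mono_on (μ := volume) (f := f)
        (g := fun _ => f x₀ + ρ/8) (show x₀ ≤ x₀ + ℓk K by linarith)
        (hII x₀ (x₀ + ℓk K) le_rfl (by linarith) (by linarith))
        intervalIntegrable_const ?_
      · simp only [intervalIntegral.integral_const, smul_eq_mul] at hmono
        linarith
      · intro u hu
        obtain ⟨hu1, hu2⟩ := hu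
        have hu0 : u ∈ Icc (0:ℝ) 1 := hIcc u hu1 (by linarith)
        have hh := hHold u hu0 x₀ (hIcc x₀ le_rfl hxy.le) hu1
        have hpow : (u - x₀) ^ s ≤ Λ ^ s :=
          Real.rpow_le_rpow (by linarith) (by linarith) hs0.le
        have hRu : R * (u - x₀) ^ s ≤ ρ / 8 := by
          rw [← hRΛs]; exact mul_le_mul_of_nonneg_left hpow hR.le
        linarith
    have e1 : g K = (∫ u in (y₀ - ℓk K)..y₀, f u) / ℓk K
        - (∫ u in x₀..(x₀ + ℓk K), f u) / ℓk K := rfl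
    rw [e1, div_sub_div_same, le_div_iff₀ hℓKpos]
    have h34 : (f y₀ - ρ/8) * ℓk K - (f x₀ + ρ/8) * ℓk K = 3/4 * ρ * ℓk K := by
      rw [hρdef]; ring
    nlinarith [hRlow, hLhigh]
  -- upper bound for g K and contradiction
  have hup : g K ≤ 10 * T * Real.sqrt 2 / Real.sqrt Λ := by
    have h1 := hbound K
    have h2 : 10 * T * (Real.sqrt 2)^K / Real.sqrt L = 10 * T / Real.sqrt (ℓk K) := by
      rw [div_eq_div_iff hsqL.ne' (Real.sqrt_pos.mpr (hℓpos K)).ne', ← hsqrtℓk K]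
      ring
    have h3 : 10 * T / Real.sqrt (ℓk K) ≤ 10 * T * Real.sqrt 2 / Real.sqrt Λ := by
      rw [div_le_div_iff₀ (Real.sqrt_pos.mpr (hℓpos K)) (Real.sqrt_pos.mpr hΛpos)]
      have h4 : Real.sqrt Λ ≤ Real.sqrt 2 * Real.sqrt (ℓk K) := by
        rw [← Real.sqrt_mul (by norm_num)]
        exact Real.sqrt_le_sqrt (by linarith)
      nlinarith [hTpos.le, Real.sqrt_nonneg (ℓk K), Real.sqrt_nonneg Λ]
    linarith
  have hfinal : 10 * T * Real.sqrt 2 / Real.sqrt Λ < 3/4 * ρ := by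
    have hsΛ : 0 < Real.sqrt Λ := Real.sqrt_pos.mpr hΛpos
    rw [hTdef, div_lt_iff₀ hsΛ]
    have hs2lt : Real.sqrt 2 < 3/2 := by
      rw [Real.sqrt_lt' (by norm_num)]
      norm_num
    nlinarith [hρ, hsΛ]
  linarith

end
end

section
/- Let s ∈ (0,1] and L ≥ 1, and let G(s,L) be the set of integrable functions g : [0,1] → ℝ with g(0) = 0, g(1) = 1, and g(u) − g(v) ≤ L(u−v)^s for all 0 ≤ v ≤ u ≤ 1. Then for every g ∈ G(s,L), sup_{0 ≤ x < t < y ≤ 1} ((t−x)/√(y−x)) (ḡ_{xy} − ḡ_{xt}) ≥ (s/(7 · 2^{1+s+1/s})) L^{−1/(2s)}. -/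
open MeasureTheory ProbabilityTheory Set

noncomputable section

set_option maxHeartbeats 1000000 in
theorem statement_15 (s L : ℝ) (hs : s ∈ Ioc (0:ℝ) 1) (hL : 1 ≤ L)
    (g : ℝ → ℝ) (hg : IntegrableOn g (Icc 0 1)) (hg0 : g 0 = 0) (hg1 : g 1 = 1)
    (hghold : ∀ u ∈ Icc (0:ℝ) 1, ∀ v ∈ Icc (0:ℝ) 1, v ≤ u → g u - g v ≤ L * (u - v) ^ s) :
    s / (7 * 2 ^ (1 + s + 1 / s)) * L ^ (-(1:ℝ) / (2 * s)) ≤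
      sSup {w : ℝ | ∃ x t y : ℝ, 0 ≤ x ∧ x < t ∧ t < y ∧ y ≤ 1 ∧
        w = (t - x) / Real.sqrt (y - x) * (fbar g x y - fbar g x t)} := by
  obtain ⟨hs0, hs1⟩ := hs
  have hL0 : (0:ℝ) < L := lt_of_lt_of_le one_pos hL
  set S := {w : ℝ | ∃ x t y : ℝ, 0 ≤ x ∧ x < t ∧ t < y ∧ y ≤ 1 ∧
        w = (t - x) / Real.sqrt (y - x) * (fbar g x y - fbar g x t)} with hS
  set E := sSup S with hEdef
  -- pointwise bounds on g
  have hup : ∀ u, 0 ≤ u → u ≤ 1 → g u ≤ L * u ^ s := by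
    intro u h0 h1
    have := hghold u ⟨h0, h1⟩ 0 ⟨le_refl 0, zero_le_one⟩ h0
    rwa [hg0, sub_zero, sub_zero] at this
  have hlow : ∀ u, 0 ≤ u → u ≤ 1 → 1 - L * (1-u) ^ s ≤ g u := by
    intro u h0 h1
    have := hghold 1 ⟨zero_le_one, le_refl 1⟩ u ⟨h0, h1⟩ h1
    rw [hg1] at this; linarith
  have habs : ∀ u ∈ Icc (0:ℝ) 1, |g u| ≤ L := by
    intro u ⟨h0, h1⟩
    have hu1 : u ^ s ≤ 1 := Real.rpow_le_one h0 h1 hs0.le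
    have hu1' : (0:ℝ) ≤ u ^ s := Real.rpow_nonneg h0 s
    have hu2 : (1-u) ^ s ≤ 1 := Real.rpow_le_one (by linarith) (by linarith) hs0.le
    have hpos : (0:ℝ) ≤ (1-u) ^ s := Real.rpow_nonneg (by linarith) s
    have b1 := hup u h0 h1
    have b2 := hlow u h0 h1
    rw [abs_le]
    constructor
    · nlinarith
    · nlinarith
  -- integrability
  have hInt : ∀ a b : ℝ, 0 ≤ a → a ≤ b → b ≤ 1 → IntervalIntegrable g volume a b := by
    intro a b h0 hab h1
    apply IntegrableOn.intervalIntegrable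
    rw [uIcc_of_le hab]
    exact hg.mono_set (Icc_subset_Icc h0 h1)
  -- norm bound on fbar
  have hfbar : ∀ a b : ℝ, 0 ≤ a → a < b → b ≤ 1 → |fbar g a b| ≤ L := by
    intro a b h0 hab h1
    have hba : (0:ℝ) < b - a := by linarith
    have hnorm : ‖∫ u in a..b, g u‖ ≤ L * |b - a| := by
      apply intervalIntegral.norm_integral_le_of_norm_le_const
      intro x hx
      rw [uIoc_of_le hab.le] at hx
      rw [Real.norm_eq_abs]
      exact habs x ⟨by linarith [hx.1], by linarith [hx.2]⟩
    rw [Real.norm_eq_abs, abs_of_pos hba] at hnorm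
    rw [fbar, abs_mul, abs_inv, abs_of_pos hba]
    calc (b-a)⁻¹ * |∫ u in a..b, g u| ≤ (b-a)⁻¹ * (L * (b-a)) := by
          apply mul_le_mul_of_nonneg_left hnorm (by positivity)
      _ = L := by field_simp
  -- bounded above
  have hbdd : BddAbove S := by
    refine ⟨2*L, ?_⟩
    rintro w ⟨x, t, y, hx, hxt, hty, hy1, rfl⟩
    have hxy : x < y := hxt.trans hty
    have h1 : |fbar g x y| ≤ L := hfbar x y hx hxy hy1
    have h2 : |fbar g x t| ≤ L := hfbar x t hx hxt (by linarith)
    have hsq : 0 < Real.sqrt (y - x) := Real.sqrt_pos.2 (by linarith)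
    have hfrac : (t - x) / Real.sqrt (y - x) ≤ 1 := by
      rw [div_le_one hsq]
      calc t - x ≤ y - x := by linarith
        _ = Real.sqrt ((y-x)^2) := (Real.sqrt_sq (by linarith)).symm
        _ ≤ Real.sqrt (y - x) := Real.sqrt_le_sqrt (by nlinarith)
    have hfrac0 : 0 ≤ (t - x) / Real.sqrt (y - x) := div_nonneg (by linarith) hsq.le
    rcases le_or_gt (fbar g x y - fbar g x t) 0 with h | h
    · have : (t - x) / Real.sqrt (y - x) * (fbar g x y - fbar g x t) ≤ 0 :=
        mul_nonpos_of_nonneg_of_nonpos hfrac0 h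
      linarith
    · calc (t - x) / Real.sqrt (y - x) * (fbar g x y - fbar g x t)
          ≤ 1 * (fbar g x y - fbar g x t) := mul_le_mul_of_nonneg_right hfrac h.le
        _ ≤ 2*L := by
            rw [one_mul]
            cases' abs_le.1 h1 with _ h1b; cases' abs_le.1 h2 with h2a _; linarith
  have hE : ∀ x t y : ℝ, 0 ≤ x → x < t → t < y → y ≤ 1 →
      (t - x) / Real.sqrt (y - x) * (fbar g x y - fbar g x t) ≤ E :=
    fun x t y hx hxt hty hy1 => le_csSup hbdd ⟨x, t, y, hx, hxt, hty, hy1, rfl⟩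
  -- the dyadic scales
  set K : ℕ := ⌈(2 + Real.logb 2 L)/s⌉₊ with hKdef
  have hlogb : 0 ≤ Real.logb 2 L := Real.logb_nonneg one_lt_two hL
  have hKarg : 0 < (2 + Real.logb 2 L)/s := by positivity
  have hKpos : 0 < K := Nat.ceil_pos.2 hKarg
  have hKge : (2 + Real.logb 2 L)/s ≤ (K:ℝ) := Nat.le_ceil _
  have hKle : (K:ℝ) ≤ (2 + Real.logb 2 L)/s + 1 := (Nat.ceil_lt_add_one hKarg.le).le
  set ℓ : ℕ → ℝ := fun k => (2:ℝ) ^ ((k:ℝ) - (K:ℝ)) with hℓdef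
  have hℓpos : ∀ k, 0 < ℓ k := fun k => Real.rpow_pos_of_pos two_pos _
  have hℓdouble : ∀ k, ℓ (k+1) = 2 * ℓ k := by
    intro k
    have h : ((k:ℝ) + 1) - K = 1 + ((k:ℝ) - K) := by ring
    simp only [hℓdef]; push_cast
    rw [h, Real.rpow_add two_pos, Real.rpow_one]
  have hℓK : ℓ K = 1 := by simp [hℓdef]
  have hℓle_half : ∀ k, k < K → ℓ k ≤ 1/2 := by
    intro k hk
    have h : (k:ℝ) - K ≤ -1 := by
      have : (k:ℝ) + 1 ≤ K := by exact_mod_cast Nat.succ_le_of_lt hk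
      linarith
    calc ℓ k ≤ (2:ℝ) ^ (-1:ℝ) := Real.rpow_le_rpow_of_exponent_le one_le_two h
      _ = 1/2 := by rw [Real.rpow_neg_one]; norm_num
  have hℓle_one : ∀ k, k ≤ K → ℓ k ≤ 1 := by
    intro k hk
    have h : (k:ℝ) - K ≤ 0 := by
      have : (k:ℝ) ≤ K := by exact_mod_cast hk
      linarith
    calc ℓ k ≤ (2:ℝ) ^ (0:ℝ) := Real.rpow_le_rpow_of_exponent_le one_le_two h
      _ = 1 := Real.rpow_zero 2
  set A : ℕ → ℝ := fun k => fbar g 0 (ℓ k) with hAdef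
  set B : ℕ → ℝ := fun k => fbar g (1 - ℓ k) 1 with hBdef
  -- step bounds
  have stepL : ∀ k, k < K → A (k+1) - A k ≤ E * (Real.sqrt (2 * ℓ k) / ℓ k) := by
    intro k hk
    have ha := hℓpos k
    have ha2 : 2 * ℓ k ≤ 1 := by linarith [hℓle_half k hk]
    have hv := hE 0 (ℓ k) (2 * ℓ k) le_rfl ha (by linarith) ha2
    rw [sub_zero, sub_zero] at hv
    have hsq : 0 < Real.sqrt (2 * ℓ k) := Real.sqrt_pos.2 (by linarith)
    have key : A (k+1) - A k = (ℓ k / Real.sqrt (2 * ℓ k) * (fbar g 0 (2 * ℓ k) - fbar g 0 (ℓ k)))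
        * (Real.sqrt (2 * ℓ k) / ℓ k) := by
      rw [hAdef]; simp only; rw [hℓdouble k]; field_simp
    rw [key]
    exact mul_le_mul_of_nonneg_right hv (by positivity)
  have stepR : ∀ k, k < K → B k - B (k+1) ≤ E * (Real.sqrt (2 * ℓ k) / ℓ k) := by
    intro k hk
    have ha := hℓpos k
    have ha2 : 2 * ℓ k ≤ 1 := by linarith [hℓle_half k hk]
    set x := 1 - 2 * ℓ k with hxdef
    set t := 1 - ℓ k with htdef
    have hv := hE x t 1 (by rw [hxdef]; linarith) (by rw [hxdef, htdef]; linarith)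
      (by rw [htdef]; linarith) le_rfl
    have h1x : 1 - x = 2 * ℓ k := by rw [hxdef]; ring
    have htx : t - x = ℓ k := by rw [hxdef, htdef]; ring
    rw [h1x, htx] at hv
    have hsq : 0 < Real.sqrt (2 * ℓ k) := Real.sqrt_pos.2 (by linarith)
    have hid : fbar g x 1 - fbar g x t = B k - B (k+1) := by
      have hsplit : (∫ u in x..t, g u) + (∫ u in t..1, g u) = ∫ u in x..1, g u :=
        intervalIntegral.integral_add_adjacent_intervals
          (hInt x t (by rw [hxdef]; linarith) (by rw [hxdef, htdef]; linarith)
            (by rw [htdef]; linarith))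
          (hInt t 1 (by rw [htdef]; linarith) (by rw [htdef]; linarith) le_rfl)
      have hBk : B k = fbar g t 1 := by rw [hBdef]
      have hBk1 : B (k+1) = fbar g x 1 := by
        rw [hBdef]; simp only; rw [hℓdouble k, ← hxdef]
      have h1t : 1 - t = ℓ k := by rw [htdef]; ring
      rw [hBk, hBk1, fbar, fbar, fbar, ← hsplit, h1x, htx, h1t]
      field_simp
      ring
    rw [hid] at hv
    have key : B k - B (k+1) = (ℓ k / Real.sqrt (2 * ℓ k) * (B k - B (k+1)))
        * (Real.sqrt (2 * ℓ k) / ℓ k) := by field_simp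
    rw [key]
    exact mul_le_mul_of_nonneg_right hv (by positivity)
  -- telescoping
  have hAK_BK : A K = B K := by rw [hAdef, hBdef]; simp only; rw [hℓK]; norm_num
  have htelA : A K - A 0 = ∑ k ∈ Finset.range K, (A (k+1) - A k) :=
    (Finset.sum_range_sub A K).symm
  have htelB : B 0 - B K = ∑ k ∈ Finset.range K, (B k - B (k+1)) :=
    (Finset.sum_range_sub' B K).symm
  set Csum : ℝ := ∑ k ∈ Finset.range K, 2 * (Real.sqrt (2 * ℓ k) / ℓ k) with hCdef
  have hsum : B 0 - A 0 ≤ E * Csum := by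
    have h1 : B 0 - A 0 = (B 0 - B K) + (A K - A 0) := by rw [hAK_BK]; ring
    rw [h1, htelA, htelB, hCdef, Finset.mul_sum, ← Finset.sum_add_distrib]
    apply Finset.sum_le_sum
    intro k hk
    have hk' := Finset.mem_range.1 hk
    have h2 : E * (2 * (Real.sqrt (2 * ℓ k) / ℓ k)) =
        E * (Real.sqrt (2 * ℓ k) / ℓ k) + E * (Real.sqrt (2 * ℓ k) / ℓ k) := by ring
    rw [h2]
    exact add_le_add (stepR k hk') (stepL k hk')
  -- lower bound on B 0 - A 0
  set δ : ℝ := ℓ 0 with hδdef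
  have hδpos : 0 < δ := hℓpos 0
  have hδ1 : δ ≤ 1 := hℓle_one 0 (Nat.zero_le K)
  have hδs0 : (0:ℝ) < δ ^ s := Real.rpow_pos_of_pos hδpos s
  have hδs : L * δ ^ s ≤ 1/4 := by
    have hKs : 2 + Real.logb 2 L ≤ (K:ℝ) * s := by
      rw [div_le_iff₀ hs0] at hKge; linarith
    have h4L : (4:ℝ) * L ≤ (2:ℝ) ^ ((K:ℝ) * s) := by
      have h : (4:ℝ) * L = (2:ℝ) ^ ((2:ℝ) + Real.logb 2 L) := by
        rw [Real.rpow_add two_pos, Real.rpow_logb two_pos (by norm_num) hL0]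
        norm_num
      rw [h]
      exact Real.rpow_le_rpow_of_exponent_le one_le_two hKs
    have hδs_eq : δ ^ s = ((2:ℝ) ^ ((K:ℝ) * s))⁻¹ := by
      rw [hδdef, hℓdef]; simp only [Nat.cast_zero, zero_sub]
      rw [← Real.rpow_mul (by norm_num : (0:ℝ) ≤ 2),
        ← Real.rpow_neg (by norm_num : (0:ℝ) ≤ 2)]
      congr 1; ring
    have hp : (0:ℝ) < (2:ℝ) ^ ((K:ℝ) * s) := Real.rpow_pos_of_pos two_pos _
    rw [hδs_eq]
    have h5 : L * ((2:ℝ) ^ ((K:ℝ) * s))⁻¹ ≤ ((2:ℝ) ^ ((K:ℝ) * s)/4) * ((2:ℝ) ^ ((K:ℝ) * s))⁻¹ :=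
      mul_le_mul_of_nonneg_right (by linarith) (by positivity)
    calc L * ((2:ℝ) ^ ((K:ℝ) * s))⁻¹ ≤ ((2:ℝ) ^ ((K:ℝ) * s)/4) * ((2:ℝ) ^ ((K:ℝ) * s))⁻¹ := h5
      _ = 1/4 := by field_simp
  have hB0 : 3/4 ≤ B 0 := by
    have hconst : ∀ u ∈ Icc (1-δ) 1, 1 - L * δ ^ s ≤ g u := by
      intro u ⟨hu1, hu2⟩
      have h0u : 0 ≤ u := by linarith
      refine le_trans ?_ (hlow u h0u hu2)
      have h := Real.rpow_le_rpow (show (0:ℝ) ≤ 1-u by linarith) (by linarith : 1-u ≤ δ) hs0.le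
      have := mul_le_mul_of_nonneg_left h hL0.le
      linarith
    have hint : (1 - L * δ ^ s) * δ ≤ ∫ u in (1-δ)..1, g u := by
      have h := intervalIntegral.integral_mono_on (by linarith : 1-δ ≤ (1:ℝ))
        (intervalIntegrable_const) (hInt (1-δ) 1 (by linarith) (by linarith) le_rfl) hconst
      rw [intervalIntegral.integral_const, smul_eq_mul,
        show (1:ℝ) - (1-δ) = δ by ring, mul_comm] at h
      exact h
    have hB0eq : B 0 = δ⁻¹ * ∫ u in (1-δ)..1, g u := by
      rw [hBdef]; simp only; rw [← hδdef, fbar, show (1:ℝ) - (1-δ) = δ by ring]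
    rw [hB0eq]
    calc (3:ℝ)/4 ≤ 1 - L * δ ^ s := by linarith
      _ = δ⁻¹ * ((1 - L * δ ^ s) * δ) := by field_simp
      _ ≤ δ⁻¹ * ∫ u in (1-δ)..1, g u := mul_le_mul_of_nonneg_left hint (by positivity)
  have hA0 : A 0 ≤ 1/4 := by
    have hconst : ∀ u ∈ Icc (0:ℝ) δ, g u ≤ L * δ ^ s := by
      intro u ⟨h0, h1⟩
      refine (hup u h0 (le_trans h1 hδ1)).trans ?_
      exact mul_le_mul_of_nonneg_left (Real.rpow_le_rpow h0 h1 hs0.le) hL0.le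
    have hint : (∫ u in (0:ℝ)..δ, g u) ≤ L * δ ^ s * δ := by
      have h := intervalIntegral.integral_mono_on (le_of_lt hδpos)
        (hInt 0 δ le_rfl hδpos.le hδ1) (intervalIntegrable_const) hconst
      rw [intervalIntegral.integral_const, smul_eq_mul, sub_zero, mul_comm] at h
      exact h
    have hA0eq : A 0 = δ⁻¹ * ∫ u in (0:ℝ)..δ, g u := by
      rw [hAdef]; simp only; rw [← hδdef, fbar, sub_zero]
    rw [hA0eq]
    calc δ⁻¹ * ∫ u in (0:ℝ)..δ, g u ≤ δ⁻¹ * (L * δ ^ s * δ) :=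
          mul_le_mul_of_nonneg_left hint (by positivity)
      _ = L * δ ^ s := by field_simp
      _ ≤ 1/4 := hδs
  -- geometric sum bound
  set u2 : ℝ := Real.sqrt 2 with hu2def
  have hu2 : (1:ℝ) < u2 := by
    rw [hu2def, show (1:ℝ) = Real.sqrt 1 from (Real.sqrt_one).symm]
    exact Real.sqrt_lt_sqrt (by norm_num) (by norm_num)
  have hu2sq : u2^2 = 2 := Real.sq_sqrt (by norm_num)
  have hterm : ∀ k ∈ Finset.range K, 2 * (Real.sqrt (2 * ℓ k) / ℓ k) = (2*u2) * u2^(K-k) := by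
    intro k hk
    have hkK := Finset.mem_range.1 hk
    have hcast : ((K - k : ℕ) : ℝ) = (K:ℝ) - k := by
      rw [Nat.cast_sub hkK.le]
    have h1 : u2^(K-k) = (2:ℝ)^(((K:ℝ)-k)/2) := by
      rw [← Real.rpow_natCast u2 (K-k), hu2def, Real.sqrt_eq_rpow,
        ← Real.rpow_mul (by norm_num : (0:ℝ) ≤ 2), hcast]
      congr 1; ring
    rw [h1, hℓdef]; simp only
    rw [Real.sqrt_mul (by norm_num : (0:ℝ) ≤ 2),
      Real.sqrt_eq_rpow ((2:ℝ)^((k:ℝ)-(K:ℝ))), ← Real.rpow_mul (by norm_num : (0:ℝ) ≤ 2),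
      mul_div_assoc, ← Real.rpow_sub two_pos,
      show ((k:ℝ)-(K:ℝ)) * (1/2) - ((k:ℝ)-(K:ℝ)) = ((K:ℝ)-k)/2 by ring,
      hu2def]
    ring
  have hCval : Csum = 4 * ((u2^K - 1)/(u2-1)) := by
    have h1 : Csum = (2*u2) * ∑ k ∈ Finset.range K, u2^(K-k) := by
      rw [hCdef, Finset.mul_sum]
      exact Finset.sum_congr rfl hterm
    have h2 : ∑ k ∈ Finset.range K, u2^(K-k) = ∑ j ∈ Finset.range K, u2^(j+1) := by
      rw [← Finset.sum_range_reflect (fun j => u2^(j+1)) K]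
      apply Finset.sum_congr rfl
      intro j hj
      have := Finset.mem_range.1 hj
      congr 1
      omega
    have h3 : ∑ j ∈ Finset.range K, u2^(j+1) = (∑ j ∈ Finset.range K, u2^j) * u2 := by
      rw [Finset.sum_mul]
      exact Finset.sum_congr rfl (fun j _ => pow_succ u2 j)
    have h4 : Csum = 2*u2^2 * ((u2^K - 1)/(u2-1)) := by
      rw [h1, h2, h3, geom_sum_eq (ne_of_gt hu2)]; ring
    rw [h4, hu2sq]; norm_num
  have hu2K : (1:ℝ) < u2^K := one_lt_pow₀ hu2 (by omega : K ≠ 0)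
  have hCpos : 0 < Csum := by
    rw [hCval]
    apply mul_pos (by norm_num)
    exact div_pos (by linarith) (by linarith)
  have hE1 : 1/(2*Csum) ≤ E := by
    rw [div_le_iff₀ (by positivity)]
    have h12 : (1:ℝ)/2 ≤ E * Csum := le_trans (by linarith) hsum
    have hr : E * (2*Csum) = 2*(E*Csum) := by ring
    rw [hr]; linarith
  have hE3 : (u2-1)/(8*u2^K) ≤ E := by
    refine le_trans ?_ hE1
    have h2C : 2*Csum = 8*(u2^K-1)/(u2-1) := by rw [hCval]; ring
    rw [h2C, one_div_div]
    gcongr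
    · linarith
  -- final arithmetic
  set Lp : ℝ := L ^ (-(1:ℝ)/(2*s)) with hLpdef
  have hLppos : 0 < Lp := Real.rpow_pos_of_pos hL0 _
  have hfin1 : (2:ℝ)^(-(1:ℝ)/2) * (2:ℝ)^(-(1:ℝ)/s) * Lp ≤ (2:ℝ)^(-(K:ℝ)/2) := by
    have he : (2:ℝ)^(-(1:ℝ)/2) * (2:ℝ)^(-(1:ℝ)/s) * Lp
        = (2:ℝ)^((-(1:ℝ)/2 + -(1:ℝ)/s) + Real.logb 2 L * (-(1:ℝ)/(2*s))) := by
      rw [Real.rpow_add two_pos, Real.rpow_add two_pos, hLpdef,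
        Real.rpow_mul (le_of_lt two_pos), Real.rpow_logb two_pos (by norm_num) hL0]
    rw [he]
    apply Real.rpow_le_rpow_of_exponent_le one_le_two
    have hKs2 : (K:ℝ)*s ≤ 2 + Real.logb 2 L + s := by
      have h := mul_le_mul_of_nonneg_right hKle hs0.le
      rw [add_mul, div_mul_cancel₀ _ (ne_of_gt hs0), one_mul] at h
      linarith
    rw [← sub_nonneg]
    have heq : -(K:ℝ)/2 - ((-(1:ℝ)/2 + -(1:ℝ)/s) + Real.logb 2 L * (-(1:ℝ)/(2*s)))
        = ((2 + Real.logb 2 L + s) - (K:ℝ)*s)/(2*s) := by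
      field_simp; ring
    rw [heq]
    exact div_nonneg (by linarith) (by linarith)
  have hu2Keq : (2:ℝ)^(-(K:ℝ)/2) = (u2^K)⁻¹ := by
    have h1 : (u2:ℝ)^K = (2:ℝ)^((K:ℝ)/2) := by
      rw [← Real.rpow_natCast u2 K, hu2def, Real.sqrt_eq_rpow,
        ← Real.rpow_mul (by norm_num : (0:ℝ) ≤ 2)]
      congr 1; ring
    rw [h1, ← Real.rpow_neg (by norm_num : (0:ℝ) ≤ 2)]
    congr 1; ring
  -- the scalar inequality
  have h2s : 2*s ≤ (2:ℝ)^s := by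
    have hexp := convexOn_exp.2 (mem_univ (Real.log 2)) (mem_univ (0:ℝ))
      (by linarith : (0:ℝ) ≤ 1 - s) hs0.le (by ring)
    simp only [smul_eq_mul, mul_zero, add_zero, Real.exp_zero, Real.exp_log two_pos] at hexp
    have h2 : (2:ℝ)^(1-s) ≤ 2 - s := by
      rw [Real.rpow_def_of_pos two_pos]
      calc Real.exp (Real.log 2 * (1-s)) = Real.exp ((1-s) * Real.log 2) := by ring_nf
        _ ≤ (1-s)*2 + s*1 := hexp
        _ = 2 - s := by ring
    have h3 : (2:ℝ)^(1-s) ≤ 1/s := by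
      refine h2.trans ?_
      rw [le_div_iff₀ hs0]; nlinarith [sq_nonneg (1-s)]
    have h4 : (2:ℝ)^s * (2:ℝ)^(1-s) = 2 := by
      rw [← Real.rpow_add two_pos]; norm_num
    have h5 : (0:ℝ) < (2:ℝ)^(1-s) := Real.rpow_pos_of_pos two_pos _
    have h6 : (0:ℝ) < (2:ℝ)^s := Real.rpow_pos_of_pos two_pos _
    nlinarith
  have hu2lo : (7:ℝ)/5 ≤ u2 := by
    rw [hu2def, show (7:ℝ)/5 = Real.sqrt ((7/5)^2) from (Real.sqrt_sq (by norm_num)).symm]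
    exact Real.sqrt_le_sqrt (by norm_num)
  have hsplit2 : (2:ℝ)^(1+s+1/s) = 2 * (2:ℝ)^s * (2:ℝ)^(1/s) := by
    rw [Real.rpow_add two_pos, Real.rpow_add two_pos, Real.rpow_one]
  have hhalfrw : (2:ℝ)^(-(1:ℝ)/2) = u2⁻¹ := by
    rw [hu2def, Real.sqrt_eq_rpow, ← Real.rpow_neg (by norm_num : (0:ℝ) ≤ 2)]
    congr 1; ring
  have hinvrw : (2:ℝ)^(-(1:ℝ)/s) = ((2:ℝ)^(1/s))⁻¹ := by
    rw [← Real.rpow_neg (by norm_num : (0:ℝ) ≤ 2)]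
    congr 1; ring
  have hX : (0:ℝ) < (2:ℝ)^(1/s) := Real.rpow_pos_of_pos two_pos _
  have h2spos : (0:ℝ) < (2:ℝ)^s := Real.rpow_pos_of_pos two_pos _
  have hu2pos : (0:ℝ) < u2 := by linarith
  have hscalar : s/(7*(2:ℝ)^(1+s+1/s)) ≤ (u2-1)/8 * ((2:ℝ)^(-(1:ℝ)/2) * (2:ℝ)^(-(1:ℝ)/s)) := by
    rw [hsplit2, hhalfrw, hinvrw]
    rw [div_le_iff₀ (by positivity)]
    have hgoal : (u2-1)/8 * (u2⁻¹ * ((2:ℝ)^(1/s))⁻¹) * (7*(2*(2:ℝ)^s*(2:ℝ)^(1/s)))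
        = (u2-1) * 7 * (2:ℝ)^s / (4 * u2) := by
      field_simp; ring
    rw [hgoal, le_div_iff₀ (by positivity)]
    -- s * (4*u2) ≤ (u2-1)*7*2^s
    nlinarith [mul_le_mul_of_nonneg_left h2s (show (0:ℝ) ≤ 7*(u2-1) by linarith),
      mul_nonneg hs0.le (show (0:ℝ) ≤ 20*u2 - 28 by linarith)]
  calc s / (7 * 2 ^ (1 + s + 1 / s)) * Lp
      ≤ ((u2-1)/8 * ((2:ℝ)^(-(1:ℝ)/2) * (2:ℝ)^(-(1:ℝ)/s))) * Lp := by
        apply mul_le_mul_of_nonneg_right _ hLppos.le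
        exact hscalar
    _ = (u2-1)/8 * ((2:ℝ)^(-(1:ℝ)/2) * (2:ℝ)^(-(1:ℝ)/s) * Lp) := by ring
    _ ≤ (u2-1)/8 * (2:ℝ)^(-(K:ℝ)/2) :=
        mul_le_mul_of_nonneg_left hfin1 (by linarith)
    _ = (u2-1)/(8*u2^K) := by
        rw [hu2Keq]
        field_simp
    _ ≤ E := hE3

end
end

section
/- Let f be continuously differentiable on [0,1], let t ∈ (0,1), Δ > 0 with [t−Δ, t+Δ] ⊆ [0,1], and let 0 < δ ≤ Δ and M, λ > 0. Assume f'(u) ≥ 0 for all u ∈ [t−Δ, t+Δ] and f'(u) ≥ Mλ for all u ∈ [t−δ, t+δ]. Then, with x = t−Δ and y = t+Δ, ((t−x)/√(y−x)) (f̄_{xy} − f̄_{xt}) ≥ M δ² λ / (2√(2Δ)). -/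
open MeasureTheory ProbabilityTheory Set

noncomputable section

open intervalIntegral in
lemma aux_integral_id (a b : ℝ) : ∫ x in a..b, x = (b ^ 2 - a ^ 2) / 2 := integral_id

theorem statement_18 (f f' : ℝ → ℝ) (hderiv : ∀ u ∈ Icc (0:ℝ) 1, HasDerivAt f (f' u) u)
    (hcont : ContinuousOn f' (Icc 0 1))
    (t Δ δ M lam : ℝ) (ht : t ∈ Ioo (0:ℝ) 1) (hΔ : 0 < Δ)
    (hsub : Icc (t - Δ) (t + Δ) ⊆ Icc 0 1) (hδ : 0 < δ) (hδΔ : δ ≤ Δ)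
    (hM : 0 < M) (hlam : 0 < lam)
    (h1 : ∀ u ∈ Icc (t - Δ) (t + Δ), 0 ≤ f' u)
    (h2 : ∀ u ∈ Icc (t - δ) (t + δ), M * lam ≤ f' u) :
    M * δ ^ 2 * lam / (2 * Real.sqrt (2 * Δ)) ≤
      (t - (t - Δ)) / Real.sqrt ((t + Δ) - (t - Δ)) *
        (fbar f (t - Δ) (t + Δ) - fbar f (t - Δ) t) := by

  have h0 : (0:ℝ) ≤ t - Δ := (hsub ⟨le_rfl, by linarith⟩).1
  have h1' : t + Δ ≤ 1 := (hsub ⟨by linarith, le_rfl⟩).2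
  -- FTC on subintervals of [t-Δ, t+Δ]
  have hfc : ContinuousOn f (Icc 0 1) := fun u hu =>
    (hderiv u hu).continuousAt.continuousWithinAt
  have key : ∀ a b : ℝ, t - Δ ≤ a → a ≤ b → b ≤ t + Δ →
      f b - f a = ∫ u in a..b, f' u := by
    intro a b ha hab hb
    refine (intervalIntegral.integral_eq_sub_of_hasDerivAt (fun u hu => ?_) ?_).symm
    · rw [uIcc_of_le hab] at hu
      exact hderiv u ⟨by linarith [hu.1], by linarith [hu.2]⟩
    · apply (hcont.mono ?_).intervalIntegrable
      rw [uIcc_of_le hab]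
      intro u hu
      exact ⟨by linarith [hu.1], by linarith [hu.2]⟩
  have hf'int : ∀ a b : ℝ, t - Δ ≤ a → a ≤ b → b ≤ t + Δ →
      IntervalIntegrable f' MeasureTheory.volume a b := by
    intro a b ha hab hb
    apply (hcont.mono ?_).intervalIntegrable
    rw [uIcc_of_le hab]
    intro u hu
    exact ⟨by linarith [hu.1], by linarith [hu.2]⟩
  have hfint : ∀ a b : ℝ, t - Δ ≤ a → a ≤ b → b ≤ t + Δ →
      IntervalIntegrable f MeasureTheory.volume a b := by
    intro a b ha hab hb
    apply (hfc.mono ?_).intervalIntegrable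
    rw [uIcc_of_le hab]
    intro u hu
    exact ⟨by linarith [hu.1], by linarith [hu.2]⟩
  -- monotonicity of f on [t-Δ, t+Δ]
  have mono_f : ∀ a b : ℝ, t - Δ ≤ a → a ≤ b → b ≤ t + Δ → f a ≤ f b := by
    intro a b ha hab hb
    have h := key a b ha hab hb
    have hpos : 0 ≤ ∫ u in a..b, f' u := by
      apply intervalIntegral.integral_nonneg hab
      intro u hu
      exact h1 u ⟨by linarith [hu.1], by linarith [hu.2]⟩
    linarith
  -- lower bound on the right half near t
  have lowR : ∀ u ∈ Icc t (t + δ), M * lam * (u - t) ≤ f u - f t := by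
    intro u hu
    rw [key t u (by linarith) hu.1 (by linarith [hu.2])]
    have hle : ∫ v in t..u, M * lam ≤ ∫ v in t..u, f' v := by
      apply intervalIntegral.integral_mono_on hu.1
        intervalIntegrable_const (hf'int t u (by linarith) hu.1 (by linarith [hu.2]))
      intro v hv
      exact h2 v ⟨by linarith [hv.1, hu.1], by linarith [hv.2, hu.2]⟩
    rw [intervalIntegral.integral_const] at hle
    simpa [smul_eq_mul, mul_comm] using hle
  have lowL : ∀ u ∈ Icc (t - δ) t, M * lam * (t - u) ≤ f t - f u := by
    intro u hu
    rw [key u t (by linarith [hu.1]) hu.2 (by linarith)]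
    have hle : ∫ v in u..t, M * lam ≤ ∫ v in u..t, f' v := by
      apply intervalIntegral.integral_mono_on hu.2
        intervalIntegrable_const (hf'int u t (by linarith [hu.1]) hu.2 (by linarith))
      intro v hv
      exact h2 v ⟨by linarith [hv.1, hu.1], by linarith [hv.2, hu.2]⟩
    rw [intervalIntegral.integral_const] at hle
    simpa [smul_eq_mul, mul_comm] using hle
  -- integral lower bounds
  set A := ∫ u in (t - Δ)..t, f u with hA
  set B := ∫ u in t..(t + Δ), f u with hB
  have hint_sub_R : ∀ a b : ℝ, t - Δ ≤ a → a ≤ b → b ≤ t + Δ →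
      IntervalIntegrable (fun u => f u - f t) MeasureTheory.volume a b := by
    intro a b ha hab hb
    exact (hfint a b ha hab hb).sub intervalIntegrable_const
  have hint_sub_L : ∀ a b : ℝ, t - Δ ≤ a → a ≤ b → b ≤ t + Δ →
      IntervalIntegrable (fun u => f t - f u) MeasureTheory.volume a b := by
    intro a b ha hab hb
    exact intervalIntegrable_const.sub (hfint a b ha hab hb)
  have I1 : M * lam * δ ^ 2 / 2 ≤ ∫ u in t..(t + δ), (f u - f t) := by
    have hle : ∫ u in t..(t + δ), M * lam * (u - t) ≤ ∫ u in t..(t + δ), (f u - f t) := by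
      apply intervalIntegral.integral_mono_on (by linarith)
      · exact ((continuous_const.mul (continuous_id.sub continuous_const)).intervalIntegrable t (t + δ))
      · exact hint_sub_R t (t + δ) (by linarith) (by linarith) (by linarith)
      · intro u hu; exact lowR u hu
    have hcomp : ∫ u in t..(t + δ), M * lam * (u - t) = M * lam * δ ^ 2 / 2 := by
      have h1c : ∫ u in t..(t + δ), M * lam * (u - t)
          = M * lam * ∫ u in t..(t + δ), (u - t) := by
        rw [← intervalIntegral.integral_const_mul]
      rw [h1c]
      have hid : ∫ u in t..(t + δ), (u - t) = δ ^ 2 / 2 := by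
        have hc : ∫ u in t..(t + δ), (u - t) = (∫ u in t..(t + δ), u) - ∫ u in t..(t + δ), t := by
          exact intervalIntegral.integral_sub
            (continuous_id.intervalIntegrable _ _) intervalIntegrable_const
        rw [hc, intervalIntegral.integral_const, aux_integral_id]
        simp [smul_eq_mul]
        ring
      rw [hid]; ring
    linarith
  have I1' : 0 ≤ ∫ u in (t + δ)..(t + Δ), (f u - f t) := by
    apply intervalIntegral.integral_nonneg (by linarith)
    intro u hu
    have := mono_f t u (by linarith) (by linarith [hu.1]) hu.2
    linarith
  have I2 : M * lam * δ ^ 2 / 2 ≤ ∫ u in (t - δ)..t, (f t - f u) := by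
    have hle : ∫ u in (t - δ)..t, M * lam * (t - u) ≤ ∫ u in (t - δ)..t, (f t - f u) := by
      apply intervalIntegral.integral_mono_on (by linarith)
      · exact ((continuous_const.mul (continuous_const.sub continuous_id)).intervalIntegrable (t - δ) t)
      · exact hint_sub_L (t - δ) t (by linarith) (by linarith) (by linarith)
      · intro u hu; exact lowL u hu
    have hcomp : ∫ u in (t - δ)..t, M * lam * (t - u) = M * lam * δ ^ 2 / 2 := by
      have h1c : ∫ u in (t - δ)..t, M * lam * (t - u)
          = M * lam * ∫ u in (t - δ)..t, (t - u) := by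
        rw [← intervalIntegral.integral_const_mul]
      rw [h1c]
      have hid : ∫ u in (t - δ)..t, (t - u) = δ ^ 2 / 2 := by
        have hc : ∫ u in (t - δ)..t, (t - u) = (∫ u in (t - δ)..t, t) - ∫ u in (t - δ)..t, u := by
          exact intervalIntegral.integral_sub intervalIntegrable_const
            (continuous_id.intervalIntegrable _ _)
        rw [hc, intervalIntegral.integral_const, aux_integral_id]
        simp [smul_eq_mul]
        ring
      rw [hid]; ring
    linarith
  have I2' : 0 ≤ ∫ u in (t - Δ)..(t - δ), (f t - f u) := by
    apply intervalIntegral.integral_nonneg (by linarith)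
    intro u hu
    have := mono_f u t hu.1 (by linarith [hu.2]) (by linarith)
    linarith
  -- combine
  have hsplitR : ∫ u in t..(t + Δ), (f u - f t)
      = (∫ u in t..(t + δ), (f u - f t)) + ∫ u in (t + δ)..(t + Δ), (f u - f t) := by
    rw [intervalIntegral.integral_add_adjacent_intervals
      (hint_sub_R t (t + δ) (by linarith) (by linarith) (by linarith))
      (hint_sub_R (t + δ) (t + Δ) (by linarith) (by linarith) (by linarith))]
  have hsplitL : ∫ u in (t - Δ)..t, (f t - f u)
      = (∫ u in (t - Δ)..(t - δ), (f t - f u)) + ∫ u in (t - δ)..t, (f t - f u) := by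
    rw [intervalIntegral.integral_add_adjacent_intervals
      (hint_sub_L (t - Δ) (t - δ) (by linarith) (by linarith) (by linarith))
      (hint_sub_L (t - δ) t (by linarith) (by linarith) (by linarith))]
  have hBR : ∫ u in t..(t + Δ), (f u - f t) = B - Δ * f t := by
    rw [intervalIntegral.integral_sub (hfint t (t + Δ) (by linarith) (by linarith) (by linarith))
      intervalIntegrable_const, intervalIntegral.integral_const]
    simp [hB, smul_eq_mul]
  have hAL : ∫ u in (t - Δ)..t, (f t - f u) = Δ * f t - A := by
    rw [intervalIntegral.integral_sub intervalIntegrable_const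
      (hfint (t - Δ) t (by linarith) (by linarith) (by linarith)),
      intervalIntegral.integral_const]
    simp [hA, smul_eq_mul]
  have hBA : M * lam * δ ^ 2 ≤ B - A := by
    have e1 : M * lam * δ ^ 2 / 2 ≤ B - Δ * f t := by
      rw [← hBR, hsplitR]; linarith
    have e2 : M * lam * δ ^ 2 / 2 ≤ Δ * f t - A := by
      rw [← hAL, hsplitL]; linarith
    linarith
  -- final arithmetic
  have hAB : ∫ u in (t - Δ)..(t + Δ), f u = A + B := by
    rw [intervalIntegral.integral_add_adjacent_intervals
      (hfint (t - Δ) t (by linarith) (by linarith) (by linarith))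
      (hfint t (t + Δ) (by linarith) (by linarith) (by linarith))]
  have hs : (0:ℝ) < Real.sqrt (2 * Δ) := Real.sqrt_pos.mpr (by linarith)
  have hΔne : Δ ≠ 0 := ne_of_gt hΔ
  have hEq : (t - (t - Δ)) / Real.sqrt ((t + Δ) - (t - Δ)) *
        (fbar f (t - Δ) (t + Δ) - fbar f (t - Δ) t) = (B - A) / (2 * Real.sqrt (2 * Δ)) := by
    have h2Δ : (t + Δ) - (t - Δ) = 2 * Δ := by ring
    have htΔ : t - (t - Δ) = Δ := by ring
    rw [fbar, fbar, hAB, h2Δ, htΔ, ← hA]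
    field_simp
    ring
  rw [hEq]
  have : M * δ ^ 2 * lam ≤ B - A := by linarith [hBA]
  apply div_le_div_of_nonneg_right ?_ ?_ |>.trans_eq rfl
  · exact this
  · linarith


end
end

section
/- Let 0 ≤ x < y ≤ 1 and let f : [x,y] → ℝ be convex with f(v) − f(u) ≤ R(v−u) for all x ≤ u ≤ v ≤ y, for some R > 0. Then sup_{t∈[x,y]} ((t−x)/√(y−x)) (f̄_{xy} − f̄_{xt}) ≤ (R/2) (y−x)^{3/2}. -/
open MeasureTheory ProbabilityTheory Set

noncomputable section

set_option maxHeartbeats 1000000 in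
theorem statement_19 (x y R : ℝ) (hx : 0 ≤ x) (hxy : x < y) (hy : y ≤ 1) (hR : 0 < R)
    (f : ℝ → ℝ) (hconv : ConvexOn ℝ (Icc x y) f) (hint : IntegrableOn f (Icc x y))
    (hlip : ∀ u ∈ Icc x y, ∀ v ∈ Icc x y, u ≤ v → f v - f u ≤ R * (v - u)) :
    sSup ((fun t => (t - x) / Real.sqrt (y - x) * (fbar f x y - fbar f x t)) '' Icc x y) ≤
      R / 2 * (y - x) ^ ((3:ℝ) / 2) := by
  have hyx : 0 < y - x := sub_pos.mpr hxy
  have hrhs : 0 ≤ R / 2 * (y - x) ^ ((3:ℝ) / 2) := by positivity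
  apply Real.sSup_le _ hrhs
  rintro _ ⟨t, ht, rfl⟩
  dsimp only
  obtain ⟨htx, hty⟩ := ht
  rcases eq_or_lt_of_le htx with rfl | htx'
  · simp [hrhs]
  have hs : Real.sqrt (y - x) > 0 := Real.sqrt_pos.mpr hyx
  have hss : Real.sqrt (y - x) * Real.sqrt (y - x) = y - x := Real.mul_self_sqrt hyx.le
  have ha : 0 < t - x := sub_pos.mpr htx'
  have hb : 0 ≤ y - t := sub_nonneg.mpr hty
  have htmem : t ∈ Icc x y := ⟨htx, hty⟩
  have hint1 : IntervalIntegrable f volume x t := by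
    rw [intervalIntegrable_iff_integrableOn_Icc_of_le htx]
    exact hint.mono_set (Icc_subset_Icc le_rfl hty)
  have hint2 : IntervalIntegrable f volume t y := by
    rw [intervalIntegrable_iff_integrableOn_Icc_of_le hty]
    exact hint.mono_set (Icc_subset_Icc htx le_rfl)
  have hI1 : f t * (t - x) - R * (t - x) ^ 2 / 2 ≤ ∫ u in x..t, f u := by
    have hmono : ∀ u ∈ Icc x t, f t - R * (t - u) ≤ f u := by
      intro u hu
      have humem : u ∈ Icc x y := ⟨hu.1, hu.2.trans hty⟩
      have := hlip u humem t htmem hu.2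
      linarith
    have hii : IntervalIntegrable (fun u => f t - R * (t - u)) volume x t :=
      Continuous.intervalIntegrable (by fun_prop) x t
    have hle := intervalIntegral.integral_mono_on htx hii hint1 hmono
    have hcomp : (∫ u in x..t, (f t - R * (t - u))) =
        f t * (t - x) - R * (t - x) ^ 2 / 2 := by
      have heq : (fun u : ℝ => f t - R * (t - u)) = fun u => (f t - R * t) + R * u := by
        funext u; ring
      rw [heq, intervalIntegral.integral_add (Continuous.intervalIntegrable (by fun_prop) x t)
        (Continuous.intervalIntegrable (by fun_prop) x t),
        intervalIntegral.integral_const, intervalIntegral.integral_const_mul, integral_id,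
        smul_eq_mul]
      ring
    linarith [hcomp ▸ hle]
  have hI2 : (∫ u in t..y, f u) ≤ f t * (y - t) + R * (y - t) ^ 2 / 2 := by
    have hmono : ∀ u ∈ Icc t y, f u ≤ f t + R * (u - t) := by
      intro u hu
      have humem : u ∈ Icc x y := ⟨htx.trans hu.1, hu.2⟩
      have := hlip t htmem u humem hu.1
      linarith
    have hii : IntervalIntegrable (fun u => f t + R * (u - t)) volume t y :=
      Continuous.intervalIntegrable (by fun_prop) t y
    have hle := intervalIntegral.integral_mono_on hty hint2 hii hmono
    have hcomp : (∫ u in t..y, (f t + R * (u - t))) =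
        f t * (y - t) + R * (y - t) ^ 2 / 2 := by
      have heq : (fun u : ℝ => f t + R * (u - t)) = fun u => (f t - R * t) + R * u := by
        funext u; ring
      rw [heq, intervalIntegral.integral_add (Continuous.intervalIntegrable (by fun_prop) t y)
        (Continuous.intervalIntegrable (by fun_prop) t y),
        intervalIntegral.integral_const, intervalIntegral.integral_const_mul, integral_id,
        smul_eq_mul]
      ring
    linarith [hcomp ▸ hle]
  have hsplit : (∫ u in x..y, f u) = (∫ u in x..t, f u) + ∫ u in t..y, f u :=
    (intervalIntegral.integral_add_adjacent_intervals hint1 hint2).symm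
  have hrpow : (y - x) ^ ((3:ℝ) / 2) = (y - x) * Real.sqrt (y - x) := by
    rw [Real.sqrt_eq_rpow,
      show (y - x) * (y - x) ^ ((1:ℝ)/2) = (y - x) ^ (1:ℝ) * (y - x) ^ ((1:ℝ)/2) by
        rw [Real.rpow_one],
      ← Real.rpow_add hyx]
    norm_num
  rw [hrpow]
  unfold fbar
  rw [hsplit]
  set I1 := ∫ u in x..t, f u with hI1def
  set I2 := ∫ u in t..y, f u with hI2def
  rw [div_mul_eq_mul_div, div_le_iff₀ hs,
    show R / 2 * ((y - x) * Real.sqrt (y - x)) * Real.sqrt (y - x)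
      = R / 2 * (y - x) * (Real.sqrt (y - x) * Real.sqrt (y - x)) by ring, hss,
    mul_sub, mul_inv_cancel_left₀ ha.ne',
    show (t - x) * ((y - x)⁻¹ * (I1 + I2)) = (t - x) * (I1 + I2) / (y - x) by ring,
    sub_le_iff_le_add, div_le_iff₀ hyx]
  nlinarith [mul_le_mul_of_nonneg_left hI2 ha.le, mul_le_mul_of_nonneg_left hI1 hb,
    mul_nonneg (mul_nonneg hR.le ha.le) hb, mul_pos hR hyx, sq_nonneg (t - x + (y - t)),
    mul_nonneg (mul_nonneg hR.le ha.le) ha.le, mul_nonneg (mul_nonneg hR.le hb) hb]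

end
end
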